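/- arXiv:2110.13144 — 4 statements merged into one kernel-verified Lean document; each statement's English description precedes it below -/
import Mathlib

section
/- Let (Ω, 𝓕, P) be a probability space with a filtration 𝓕_0 ⊆ 𝓕_1 ⊆ ⋯ ⊆ 𝓕_K, and let ε_1, …, ε_K be ℝ^d-valued random vectors such that for each k ∈ {1,…,K}, ε_k is 𝓕_k-measurable, E[ε_k | 𝓕_{k−1}] = 0 almost surely, and ‖ε_k‖₂ ≤ B_k almost surely for a deterministic constant B_k ≥ 0. Then for every δ ∈ (0,1), with probability at least 1 − δ, ‖∑_{k=1}^K ε_k‖₂² ≤ 4 log(4/δ) ∑_{k=1}^K B_k². -/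
open MeasureTheory ProbabilityTheory Real

section Kernel
lemma AH.hoeffding_kernel {p h : ℝ} (hp0 : 0 ≤ p) (hp1 : p ≤ 1) :
    (1 - p) * exp (-p * h) + p * exp ((1 - p) * h) ≤ exp (h ^ 2 / 8) := by
  rcases eq_or_lt_of_le hp0 with hp0' | hp0'
  · simp only [← hp0']
    simpa using Real.one_le_exp (by positivity)
  rcases eq_or_lt_of_le hp1 with hp1' | hp1'
  · simp only [hp1']
    simpa using Real.one_le_exp (by positivity)
  -- now 0 < p < 1
  obtain ⟨D, hD⟩ : ∃ D : ℝ → ℝ, D = fun x => (1 - p) + p * exp x := ⟨_, rfl⟩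
  have hDx : ∀ x, D x = (1 - p) + p * exp x := fun x => by rw [hD]
  have hDpos : ∀ x, 0 < D x := fun x => by
    rw [hDx]; have := exp_pos x; nlinarith
  obtain ⟨g, hg⟩ : ∃ g : ℝ → ℝ, g = fun x => x ^ 2 / 8 + p * x - log (D x) := ⟨_, rfl⟩
  obtain ⟨g', hg'⟩ : ∃ g' : ℝ → ℝ, g' = fun x => x / 4 + p - p * exp x / D x := ⟨_, rfl⟩
  have hgx : ∀ x, g x = x ^ 2 / 8 + p * x - log (D x) := fun x => by rw [hg]
  have hg'x : ∀ x, g' x = x / 4 + p - p * exp x / D x := fun x => by rw [hg']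
  have hDder : ∀ x, HasDerivAt D (p * exp x) x := fun x => by
    rw [hD]; simpa using ((hasDerivAt_exp x).const_mul p).const_add (1 - p)
  have hgder : ∀ x, HasDerivAt g (g' x) x := by
    intro x
    rw [hg, hg'x]
    have h1 : HasDerivAt (fun x : ℝ => x ^ 2 / 8 + p * x) (x / 4 + p) x := by
      have := ((hasDerivAt_pow 2 x).div_const 8).add ((hasDerivAt_id x).const_mul p)
      exact this.congr_deriv (by norm_num; ring)
    have h2 : HasDerivAt (fun x => log (D x)) (p * exp x / D x) x :=
      (hDder x).log (hDpos x).ne'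
    exact h1.sub h2
  have hg'der : ∀ x, HasDerivAt g' (1 / 4 - p * (1 - p) * exp x / (D x) ^ 2) x := by
    intro x
    rw [hg']
    have h1 : HasDerivAt (fun x : ℝ => x / 4 + p) (1 / 4) x := by
      simpa using (hasDerivAt_id x).div_const 4 |>.add_const p
    have h2 : HasDerivAt (fun x => p * exp x / D x)
        ((p * exp x * D x - p * exp x * (p * exp x)) / (D x) ^ 2) x :=
      ((hasDerivAt_exp x).const_mul p).div (hDder x) (hDpos x).ne'
    have heq : p * (1 - p) * exp x = p * exp x * D x - p * exp x * (p * exp x) := by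
      rw [hDx]; ring
    rw [show (1 : ℝ) / 4 - p * (1 - p) * exp x / (D x) ^ 2
        = 1 / 4 - (p * exp x * D x - p * exp x * (p * exp x)) / (D x) ^ 2 by rw [heq]]
    exact h1.sub h2
  have hg'mono : Monotone g' := by
    apply monotone_of_deriv_nonneg
    · exact fun x => (hg'der x).differentiableAt
    · intro x
      rw [(hg'der x).deriv]
      have hD2 : 0 < (D x) ^ 2 := pow_pos (hDpos x) 2
      have h4 : 4 * (p * (1 - p) * exp x) ≤ (D x) ^ 2 := by
        rw [hDx]; nlinarith [sq_nonneg ((1 - p) - p * exp x)]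
      rw [sub_nonneg, div_le_iff₀ hD2]
      linarith
  have hg'0 : g' 0 = 0 := by
    rw [hg'x, hDx]; rw [exp_zero]; field_simp; ring
  have hg0 : g 0 = 0 := by
    rw [hgx, hDx]; rw [exp_zero]; norm_num
  have hgdiff : Differentiable ℝ g := fun y => (hgder y).differentiableAt
  have hgnn : ∀ x, 0 ≤ g x := by
    intro x
    rcases le_total 0 x with hx | hx
    · have hmono : MonotoneOn g (Set.Ici 0) := by
        refine monotoneOn_of_deriv_nonneg (convex_Ici 0) hgdiff.continuous.continuousOn
          hgdiff.differentiableOn ?_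
        intro y hy
        rw [(hgder y).deriv, ← hg'0]
        exact hg'mono (le_of_lt (by simpa using hy))
      have := hmono Set.self_mem_Ici (by exact hx) hx
      rwa [hg0] at this
    · have hanti : AntitoneOn g (Set.Iic 0) := by
        refine antitoneOn_of_deriv_nonpos (convex_Iic 0) hgdiff.continuous.continuousOn
          hgdiff.differentiableOn ?_
        intro y hy
        rw [(hgder y).deriv, ← hg'0]
        exact hg'mono (le_of_lt (by simpa using hy))
      have := hanti (by exact hx) Set.self_mem_Iic hx
      rwa [hg0] at this
  have hgh := hgnn h
  rw [hgx] at hgh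
  have hlog : log (D h) ≤ h ^ 2 / 8 + p * h := by linarith
  have hDle : D h ≤ exp (h ^ 2 / 8 + p * h) := by
    rw [← exp_log (hDpos h)]
    exact exp_le_exp.2 hlog
  have key : exp (-p * h) * D h ≤ exp (h ^ 2 / 8) := by
    calc exp (-p * h) * D h ≤ exp (-p * h) * exp (h ^ 2 / 8 + p * h) :=
          mul_le_mul_of_nonneg_left hDle (le_of_lt (exp_pos _))
      _ = exp (h ^ 2 / 8) := by rw [← exp_add]; ring_nf
  calc (1 - p) * exp (-p * h) + p * exp ((1 - p) * h)
      = exp (-p * h) * D h := by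
        rw [hDx, show (1 - p) * h = h + (-p * h) by ring, exp_add]
        ring
    _ ≤ exp (h ^ 2 / 8) := key

end Kernel

lemma AH.sqrt_lip {x y aq : ℝ} (ha : 0 ≤ aq) (hy : 0 ≤ y) (hxy : y ≤ x) :
    Real.sqrt (x^2 + aq) ≤ Real.sqrt (y^2 + aq) + (x - y) := by
  have h1 : 0 ≤ y^2 + aq := by positivity
  have h2 : y ≤ Real.sqrt (y^2 + aq) := by
    have := Real.sqrt_le_sqrt (show y^2 ≤ y^2 + aq by linarith)
    rwa [Real.sqrt_sq hy] at this
  have h3 : 0 ≤ Real.sqrt (y^2 + aq) := Real.sqrt_nonneg _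
  have h5 : Real.sqrt (y^2 + aq) ^ 2 = y^2 + aq := Real.sq_sqrt h1
  have h4 : x^2 + aq ≤ (Real.sqrt (y^2 + aq) + (x - y))^2 := by
    nlinarith [mul_nonneg (sub_nonneg.2 hxy) (sub_nonneg.2 h2)]
  calc Real.sqrt (x^2 + aq) ≤ Real.sqrt ((Real.sqrt (y^2 + aq) + (x - y))^2) :=
        Real.sqrt_le_sqrt h4
    _ = Real.sqrt (y^2 + aq) + (x - y) := Real.sqrt_sq (by linarith)


section CondExp
variable {Ω : Type*} {m m0 : MeasurableSpace Ω} {μ : Measure Ω} [IsProbabilityMeasure μ]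

lemma AH.integrable_of_ae_bdd {f : Ω → ℝ} (hf : AEStronglyMeasurable f μ) {M : ℝ}
    (h : ∀ᵐ ω ∂μ, |f ω| ≤ M) : Integrable f μ :=
  Integrable.mono' (integrable_const M) hf (by simpa using h)

lemma AH.condExp_clm {E F : Type*} [NormedAddCommGroup E] [NormedSpace ℝ E] [CompleteSpace E]
    [NormedAddCommGroup F] [NormedSpace ℝ F] [CompleteSpace F]
    (hm : m ≤ m0) (T : E →L[ℝ] F) {f : Ω → E} (hf : Integrable f μ) :
    (fun ω => T ((μ[f|m]) ω)) =ᵐ[μ] μ[fun ω => T (f ω)|m] := by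
  refine ae_eq_condExp_of_forall_setIntegral_eq hm (T.integrable_comp hf) ?_ ?_ ?_
  · intro s _ _
    exact (T.integrable_comp integrable_condExp).integrableOn
  · intro s hs hμs
    rw [T.integral_comp_comm integrable_condExp.integrableOn,
      T.integral_comp_comm hf.integrableOn, setIntegral_condExp hm hf hs]
  · exact (T.continuous.comp_stronglyMeasurable stronglyMeasurable_condExp).aestronglyMeasurable

lemma AH.coord_abs_le_norm {d : ℕ} (x : EuclideanSpace ℝ (Fin d)) (i : Fin d) : |x i| ≤ ‖x‖ := by
  rw [EuclideanSpace.norm_eq, ← Real.sqrt_sq_eq_abs]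
  apply Real.sqrt_le_sqrt
  have : |x i| ^ 2 ≤ ∑ j, |x j| ^ 2 :=
    Finset.single_le_sum (f := fun j => |x j| ^ 2) (fun j _ => by positivity) (Finset.mem_univ i)
  simpa using this

/-- conditional expectation of an inner product with a measurable bounded vector vanishes -/
lemma AH.condExp_inner_zero {d : ℕ} (hm : m ≤ m0) {v g : Ω → EuclideanSpace ℝ (Fin d)}
    {Mv Mg : ℝ}
    (hv : StronglyMeasurable[m] v) (hvM : ∀ᵐ ω ∂μ, ‖v ω‖ ≤ Mv)
    (hg : AEStronglyMeasurable g μ) (hgM : ∀ᵐ ω ∂μ, ‖g ω‖ ≤ Mg)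
    (hgcond : μ[g|m] =ᵐ[μ] 0) :
    μ[fun ω => (inner ℝ (v ω) (g ω) : ℝ)|m] =ᵐ[μ] 0 := by
  have hgint : Integrable g μ :=
    Integrable.mono' (integrable_const Mg) hg (by simpa using hgM)
  have hcoord : ∀ i : Fin d, μ[fun ω => g ω i|m] =ᵐ[μ] 0 := by
    intro i
    have h1 := (AH.condExp_clm hm (EuclideanSpace.proj (𝕜 := ℝ) i) hgint).symm
    refine h1.trans ?_
    filter_upwards [hgcond] with ω hω
    simp [hω]
  have hsum : (fun ω => (inner ℝ (v ω) (g ω) : ℝ)) = fun ω => ∑ i, v ω i * g ω i := by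
    funext ω
    rw [PiLp.inner_apply]
    simp [RCLike.inner_apply]
    exact Finset.sum_congr rfl (fun i _ => mul_comm _ _)
  rw [hsum]
  have hvmeas : ∀ i : Fin d, StronglyMeasurable[m] (fun ω => v ω i) :=
    fun i => (EuclideanSpace.proj (𝕜 := ℝ) i).continuous.comp_stronglyMeasurable hv
  have hgmeas : ∀ i : Fin d, AEStronglyMeasurable (fun ω => g ω i) μ :=
    fun i => ((EuclideanSpace.proj (𝕜 := ℝ) i).continuous.comp_aestronglyMeasurable hg)
  have hvint : ∀ i : Fin d, Integrable (fun ω => v ω i) μ := by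
    intro i
    refine AH.integrable_of_ae_bdd (M := Mv) ((hvmeas i).mono hm).aestronglyMeasurable ?_
    filter_upwards [hvM] with ω hω
    exact (AH.coord_abs_le_norm (v ω) i).trans hω
  have hgint' : ∀ i : Fin d, Integrable (fun ω => g ω i) μ := by
    intro i
    refine AH.integrable_of_ae_bdd (M := Mg) (hgmeas i) ?_
    filter_upwards [hgM] with ω hω
    exact (AH.coord_abs_le_norm (g ω) i).trans hω
  have hprodint : ∀ i : Fin d, Integrable (fun ω => v ω i * g ω i) μ := by
    intro i
    refine AH.integrable_of_ae_bdd (((hvmeas i).mono hm).aestronglyMeasurable.mul (hgmeas i)) 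
      (M := Mv * Mg) ?_
    filter_upwards [hvM, hgM] with ω h1 h2
    rw [abs_mul]
    have c1 := AH.coord_abs_le_norm (v ω) i
    have c2 := AH.coord_abs_le_norm (g ω) i
    exact mul_le_mul (c1.trans h1) (c2.trans h2) (abs_nonneg _)
      ((abs_nonneg _).trans (c1.trans h1))
  have hfun : (fun ω => ∑ i, v ω i * g ω i) = ∑ i : Fin d, (fun ω => v ω i * g ω i) := by
    funext ω; simp [Finset.sum_apply]
  rw [hfun]
  have hzero : ∀ i : Fin d, μ[fun ω => v ω i * g ω i|m] =ᵐ[μ] 0 := by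
    intro i
    refine (condExp_mul_of_stronglyMeasurable_left (hvmeas i) (hprodint i) (hgint' i)).trans ?_
    filter_upwards [hcoord i] with ω hω
    simp only [Pi.mul_apply, Pi.zero_apply] at hω ⊢
    simp [hω]
  refine (condExp_finsetSum (fun i _ => hprodint i) m).trans ?_
  have hall : ∀ᵐ ω ∂μ, ∀ i : Fin d, (μ[fun ω => v ω i * g ω i|m]) ω = 0 := by
    rw [ae_all_iff]
    intro i
    filter_upwards [hzero i] with ω hω using hω
  filter_upwards [hall] with ω hω
  simp [Finset.sum_apply, hω]

end CondExp

section CondMGF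
variable {Ω : Type*} {m m0 : MeasurableSpace Ω} {μ : Measure Ω} [IsProbabilityMeasure μ]

/-- Conditional Hoeffding mgf bound. -/
lemma AH.cond_mgf (hm : m ≤ m0) {X a : Ω → ℝ} {c l M : ℝ} (hc : 0 ≤ c) (hl : 0 < l)
    (ha : StronglyMeasurable[m] a) (haM : ∀ᵐ ω ∂μ, |a ω| ≤ M)
    (hX : AEStronglyMeasurable X μ)
    (hrange : ∀ᵐ ω ∂μ, a ω ≤ X ω ∧ X ω ≤ a ω + c)
    (hmean : μ[X|m] =ᵐ[μ] 0) :
    ∀ᵐ ω ∂μ, (μ[fun ω => exp (l * X ω)|m]) ω ≤ exp (l ^ 2 * c ^ 2 / 8) := by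
  haveI : SigmaFinite (μ.trim hm) := inferInstance
  have hXint : Integrable X μ := by
    refine AH.integrable_of_ae_bdd (M := M + c) hX ?_
    filter_upwards [haM, hrange] with ω h1 h2
    rw [abs_le]
    have k1 := (abs_le.1 h1).1
    have k2 := (abs_le.1 h1).2
    exact ⟨by linarith [h2.1], by linarith [h2.2]⟩
  have haint : Integrable a μ := AH.integrable_of_ae_bdd (ha.mono hm).aestronglyMeasurable haM
  have hcondea : μ[a|m] = a := condExp_of_stronglyMeasurable hm ha haint
  have ha0 : ∀ᵐ ω ∂μ, a ω ≤ 0 := by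
    have h1 : μ[a|m] ≤ᵐ[μ] μ[X|m] :=
      condExp_mono haint hXint (by filter_upwards [hrange] with ω h using h.1)
    filter_upwards [h1, hmean] with ω h1 h3
    rw [hcondea] at h1; rw [h3] at h1; exact h1
  have hac0 : ∀ᵐ ω ∂μ, 0 ≤ a ω + c := by
    have hcondac : μ[fun ω => a ω + c|m] = fun ω => a ω + c := by
      have := condExp_of_stronglyMeasurable hm
        (ha.add (stronglyMeasurable_const (b := c))) (haint.add (integrable_const c))
      exact this
    have h1 : μ[X|m] ≤ᵐ[μ] μ[fun ω => a ω + c|m] :=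
      condExp_mono hXint (haint.add (integrable_const c))
        (by filter_upwards [hrange] with ω h using h.2)
    filter_upwards [h1, hmean] with ω h1 h3
    rw [hcondac, h3] at h1; exact h1
  rcases eq_or_lt_of_le hc with hc0 | hcpos
  · -- degenerate case c = 0 : X = 0 a.e.
    subst hc0
    have hX0 : (fun ω => exp (l * X ω)) =ᵐ[μ] fun _ => (1 : ℝ) := by
      filter_upwards [hrange, ha0, hac0] with ω h1 h2 h3
      have ha' : a ω = 0 := le_antisymm h2 (by linarith)
      have e1 := h1.1
      have e2 := h1.2
      have : X ω = 0 := by rw [ha'] at e1 e2; linarith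
      simp [this]
    have hce := (condExp_congr_ae (m := m) hX0).trans
      (Filter.EventuallyEq.of_eq (condExp_const hm (1 : ℝ)))
    filter_upwards [hce] with ω hω
    rw [hω]
    exact Real.one_le_exp (by positivity)
  -- main case 0 < c
  have hcne : c ≠ 0 := hcpos.ne'
  set E : ℝ := exp (l * (M + c)) with hE
  obtain ⟨f₁, hf₁⟩ : ∃ f₁ : Ω → ℝ,
      f₁ = fun ω => ((a ω + c) * exp (l * a ω) - a ω * exp (l * (a ω + c))) / c := ⟨_, rfl⟩
  obtain ⟨f₂, hf₂⟩ : ∃ f₂ : Ω → ℝ,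
      f₂ = fun ω => (exp (l * (a ω + c)) - exp (l * a ω)) / c := ⟨_, rfl⟩
  have hexpa : StronglyMeasurable[m] fun ω => exp (l * a ω) :=
    Real.continuous_exp.comp_stronglyMeasurable (ha.const_mul l)
  have hexpac : StronglyMeasurable[m] fun ω => exp (l * (a ω + c)) :=
    Real.continuous_exp.comp_stronglyMeasurable ((ha.add stronglyMeasurable_const).const_mul l)
  have hf₁m : StronglyMeasurable[m] f₁ := by
    rw [hf₁]
    simp only [div_eq_mul_inv]
    exact (((ha.add stronglyMeasurable_const).mul hexpa).sub (ha.mul hexpac)).mul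
      stronglyMeasurable_const
  have hf₂m : StronglyMeasurable[m] f₂ := by
    rw [hf₂]
    simp only [div_eq_mul_inv]
    exact (hexpac.sub hexpa).mul stronglyMeasurable_const
  -- bounds for f₁ f₂ (a.e.)
  have hexpb : ∀ᵐ ω ∂μ, exp (l * a ω) ≤ E ∧ exp (l * (a ω + c)) ≤ E := by
    filter_upwards [haM] with ω hω
    have h1 := (abs_le.1 hω).2
    constructor <;> · rw [hE]; apply exp_le_exp.2; nlinarith
  have hf₁b : ∀ᵐ ω ∂μ, |f₁ ω| ≤ ((M + c) * E + M * E) / c := by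
    filter_upwards [haM, hexpb] with ω h1 h2
    rw [hf₁]
    rw [abs_div, abs_of_pos hcpos]
    apply div_le_div_of_nonneg_right ?_ hcpos.le |>.trans (le_refl _)
    have e1 : (0:ℝ) < exp (l * a ω) := exp_pos _
    have e2 : (0:ℝ) < exp (l * (a ω + c)) := exp_pos _
    have h3 := abs_le.1 h1
    calc |(a ω + c) * exp (l * a ω) - a ω * exp (l * (a ω + c))|
        ≤ |(a ω + c) * exp (l * a ω)| + |a ω * exp (l * (a ω + c))| := abs_sub _ _
      _ = |a ω + c| * exp (l * a ω) + |a ω| * exp (l * (a ω + c)) := by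
          rw [abs_mul, abs_mul, abs_of_pos e1, abs_of_pos e2]
      _ ≤ (M + c) * E + M * E := by
          have : |a ω + c| ≤ M + c := by rw [abs_le]; constructor <;> linarith
          have hMc : (0:ℝ) ≤ M + c := le_trans (abs_nonneg _) this
          have hM : (0:ℝ) ≤ M := le_trans (abs_nonneg _) h1
          have hEpos : (0:ℝ) < E := exp_pos _
          gcongr <;> [exact h2.1; exact h2.2]
  have hf₂b : ∀ᵐ ω ∂μ, |f₂ ω| ≤ (E + E) / c := by
    filter_upwards [hexpb] with ω h2
    rw [hf₂, abs_div, abs_of_pos hcpos]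
    apply div_le_div_of_nonneg_right ?_ hcpos.le
    have e1 : (0:ℝ) < exp (l * a ω) := exp_pos _
    have e2 : (0:ℝ) < exp (l * (a ω + c)) := exp_pos _
    calc |exp (l * (a ω + c)) - exp (l * a ω)|
        ≤ |exp (l * (a ω + c))| + |exp (l * a ω)| := abs_sub _ _
      _ = exp (l * (a ω + c)) + exp (l * a ω) := by rw [abs_of_pos e2, abs_of_pos e1]
      _ ≤ E + E := add_le_add h2.2 h2.1
  have hf₁int : Integrable f₁ μ :=
    AH.integrable_of_ae_bdd (hf₁m.mono hm).aestronglyMeasurable hf₁b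
  have hf₂int : Integrable f₂ μ :=
    AH.integrable_of_ae_bdd (hf₂m.mono hm).aestronglyMeasurable hf₂b
  have hf₂Xint : Integrable (f₂ * X) μ := by
    refine AH.integrable_of_ae_bdd (M := (E + E) / c * (M + c))
      ((hf₂m.mono hm).aestronglyMeasurable.mul hX) ?_
    filter_upwards [hf₂b, haM, hrange] with ω h1 h2 h3
    rw [Pi.mul_apply, abs_mul]
    have hXb : |X ω| ≤ M + c := by
      rw [abs_le]
      have := abs_le.1 h2
      constructor <;> [linarith [h3.1]; linarith [h3.2]]
    exact mul_le_mul h1 hXb (abs_nonneg _) (le_trans (abs_nonneg _) h1)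
  have hgint : Integrable (fun ω => exp (l * X ω)) μ := by
    refine AH.integrable_of_ae_bdd (M := E)
      (Real.continuous_exp.comp_aestronglyMeasurable (hX.const_mul l)) ?_
    filter_upwards [haM, hrange] with ω h1 h2
    rw [abs_of_pos (exp_pos _), hE]
    apply exp_le_exp.2
    have := (abs_le.1 h1).2
    nlinarith [h2.2]
  -- pointwise convexity bound
  have hconv : ∀ᵐ ω ∂μ, exp (l * X ω) ≤ f₁ ω + (f₂ * X) ω := by
    filter_upwards [hrange] with ω h
    have hu : (0:ℝ) ≤ (a ω + c - X ω) / c := by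
      apply div_nonneg _ hcpos.le; linarith [h.2]
    have hv : (0:ℝ) ≤ (X ω - a ω) / c := by
      apply div_nonneg _ hcpos.le; linarith [h.1]
    have huv : (a ω + c - X ω) / c + (X ω - a ω) / c = 1 := by field_simp; ring
    have hcomb := convexOn_exp.2 (Set.mem_univ (l * a ω)) (Set.mem_univ (l * (a ω + c)))
      hu hv huv
    simp only [smul_eq_mul] at hcomb
    have harg : (a ω + c - X ω) / c * (l * a ω) + (X ω - a ω) / c * (l * (a ω + c))
        = l * X ω := by
      field_simp; ring
    rw [harg] at hcomb
    refine hcomb.trans (le_of_eq ?_)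
    rw [hf₁, hf₂]
    simp only [Pi.mul_apply]
    field_simp
    ring
  -- conditional expectation chain
  have h1 : μ[fun ω => exp (l * X ω)|m] ≤ᵐ[μ] μ[f₁ + f₂ * X|m] :=
    condExp_mono hgint (hf₁int.add hf₂Xint) (by filter_upwards [hconv] with ω h using h)
  have h2 : μ[f₁ + f₂ * X|m] =ᵐ[μ] μ[f₁|m] + μ[f₂ * X|m] := condExp_add hf₁int hf₂Xint m
  have h3 : μ[f₁|m] = f₁ := condExp_of_stronglyMeasurable hm hf₁m hf₁int
  have h4 : μ[f₂ * X|m] =ᵐ[μ] f₂ * μ[X|m] := condExp_mul_of_stronglyMeasurable_left hf₂m hf₂Xint hXint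
  -- kernel bound on f₁
  have h5 : ∀ᵐ ω ∂μ, f₁ ω ≤ exp (l ^ 2 * c ^ 2 / 8) := by
    filter_upwards [ha0, hac0] with ω h01 h02
    have hp0 : 0 ≤ -a ω / c := div_nonneg (by linarith) hcpos.le
    have hp1 : -a ω / c ≤ 1 := by
      rw [div_le_one hcpos]; linarith
    have hker := AH.hoeffding_kernel (h := l * c) hp0 hp1
    have e1 : -(-a ω / c) * (l * c) = l * a ω := by field_simp
    have e2 : (1 - -a ω / c) * (l * c) = l * (a ω + c) := by field_simp; ring
    rw [e1, e2] at hker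
    have e3 : (l * c) ^ 2 / 8 = l ^ 2 * c ^ 2 / 8 := by ring
    rw [e3] at hker
    refine le_trans (le_of_eq ?_) hker
    rw [hf₁]
    field_simp
    ring
  filter_upwards [h1, h2, h4, h5, hmean] with ω k1 k2 k4 k6 k7
  rw [k2, Pi.add_apply, h3, k4, Pi.mul_apply, k7] at k1
  simp only [Pi.zero_apply, mul_zero, add_zero] at k1
  exact k1.trans k6

end CondMGF

section MGFSum
variable {Ω : Type*} {m0 : MeasurableSpace Ω} {μ : Measure Ω} [IsProbabilityMeasure μ]

lemma AH.mgf_sum (𝓕 : Filtration ℕ m0) (D : ℕ → Ω → ℝ) (R : ℕ → ℝ) (l : ℝ) (K : ℕ)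
    (hmeas : ∀ k, k ∈ Finset.Icc 1 K → StronglyMeasurable[𝓕 k] (D k))
    (hbdd : ∀ k, k ∈ Finset.Icc 1 K → ∀ᵐ ω ∂μ, |D k ω| ≤ R k)
    (hmgf : ∀ k, k ∈ Finset.Icc 1 K → ∀ᵐ ω ∂μ,
      (μ[fun ω => Real.exp (l * D k ω)|𝓕 (k - 1)]) ω ≤ Real.exp (l ^ 2 * R k ^ 2 / 8)) :
    ∫ ω, Real.exp (l * ∑ k ∈ Finset.Icc 1 K, D k ω) ∂μ
      ≤ Real.exp (∑ k ∈ Finset.Icc 1 K, l ^ 2 * R k ^ 2 / 8) := by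
  induction K with
  | zero => simp
  | succ n IH =>
    have hsub : Finset.Icc 1 n ⊆ Finset.Icc 1 (n + 1) :=
      Finset.Icc_subset_Icc_right (by omega)
    have IH' := IH (fun k hk => hmeas k (hsub hk)) (fun k hk => hbdd k (hsub hk))
      (fun k hk => hmgf k (hsub hk))
    have hmem : n + 1 ∈ Finset.Icc 1 (n + 1) := by simp
    -- nonnegativity of R k
    have hRnn : ∀ k, k ∈ Finset.Icc 1 (n + 1) → 0 ≤ R k := by
      intro k hk
      have := (hbdd k hk).exists
      obtain ⟨ω, hω⟩ := this
      exact le_trans (abs_nonneg _) hω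
    obtain ⟨F, hF⟩ : ∃ F : Ω → ℝ, F = fun ω => Real.exp (l * ∑ k ∈ Finset.Icc 1 n, D k ω) :=
      ⟨_, rfl⟩
    obtain ⟨G, hG⟩ : ∃ G : Ω → ℝ, G = fun ω => Real.exp (l * D (n + 1) ω) := ⟨_, rfl⟩
    have hFmeas : StronglyMeasurable[𝓕 n] F := by
      rw [hF]
      refine Real.continuous_exp.comp_stronglyMeasurable (StronglyMeasurable.const_mul ?_ l)
      refine Finset.stronglyMeasurable_fun_sum _ (fun k hk => ?_)
      exact ((hmeas k (hsub hk)).mono (𝓕.mono (Finset.mem_Icc.1 hk).2))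
    have hFm0 : AEStronglyMeasurable F μ := (hFmeas.mono (𝓕.le n)).aestronglyMeasurable
    have hGm0 : AEStronglyMeasurable G μ := by
      rw [hG]
      exact Real.continuous_exp.comp_aestronglyMeasurable
        ((((hmeas _ hmem).mono (𝓕.le (n+1))).aestronglyMeasurable).const_mul l)
    set MF : ℝ := Real.exp (|l| * ∑ k ∈ Finset.Icc 1 n, R k) with hMF
    set MG : ℝ := Real.exp (|l| * R (n + 1)) with hMG
    have hFbdd : ∀ᵐ ω ∂μ, |F ω| ≤ MF := by
      have hall : ∀ᵐ ω ∂μ, ∀ k ∈ Finset.Icc 1 n, |D k ω| ≤ R k := by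
        rw [Filter.eventually_all_finset]
        intro k hk
        exact hbdd k (hsub hk)
      filter_upwards [hall] with ω hω
      rw [hF, abs_of_pos (exp_pos _), hMF]
      apply exp_le_exp.2
      calc l * ∑ k ∈ Finset.Icc 1 n, D k ω ≤ |l * ∑ k ∈ Finset.Icc 1 n, D k ω| := le_abs_self _
        _ = |l| * |∑ k ∈ Finset.Icc 1 n, D k ω| := abs_mul _ _
        _ ≤ |l| * ∑ k ∈ Finset.Icc 1 n, R k := by
            apply mul_le_mul_of_nonneg_left _ (abs_nonneg l)
            exact (Finset.abs_sum_le_sum_abs _ _).trans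
              (Finset.sum_le_sum (fun k hk => hω k hk))
    have hGbdd : ∀ᵐ ω ∂μ, |G ω| ≤ MG := by
      filter_upwards [hbdd _ hmem] with ω hω
      rw [hG, abs_of_pos (exp_pos _), hMG]
      apply exp_le_exp.2
      calc l * D (n + 1) ω ≤ |l * D (n + 1) ω| := le_abs_self _
        _ = |l| * |D (n + 1) ω| := abs_mul _ _
        _ ≤ |l| * R (n + 1) := mul_le_mul_of_nonneg_left hω (abs_nonneg l)
    have hFint : Integrable F μ := AH.integrable_of_ae_bdd hFm0 hFbdd
    have hGint : Integrable G μ := AH.integrable_of_ae_bdd hGm0 hGbdd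
    have hFGint : Integrable (F * G) μ := by
      refine AH.integrable_of_ae_bdd (M := MF * MG) (hFm0.mul hGm0) ?_
      filter_upwards [hFbdd, hGbdd] with ω h1 h2
      rw [Pi.mul_apply, abs_mul]
      exact mul_le_mul h1 h2 (abs_nonneg _) (le_trans (abs_nonneg _) h1)
    -- split the sum
    have hsplit : (fun ω => Real.exp (l * ∑ k ∈ Finset.Icc 1 (n + 1), D k ω)) = F * G := by
      funext ω
      rw [Pi.mul_apply, hF, hG, ← Real.exp_add, ← mul_add]
      congr 2
      exact Finset.sum_Icc_succ_top (by omega) _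
    rw [hsplit]
    -- tower property
    have htower : ∫ ω, (F * G) ω ∂μ = ∫ ω, (μ[F * G|𝓕 n]) ω ∂μ :=
      (integral_condExp (𝓕.le n) (f := F * G)).symm
    have hpull : μ[F * G|𝓕 n] =ᵐ[μ] F * μ[G|𝓕 n] :=
      condExp_mul_of_stronglyMeasurable_left hFmeas hFGint hGint
    have hcondbd : ∀ᵐ ω ∂μ, (μ[G|𝓕 n]) ω ≤ Real.exp (l ^ 2 * R (n + 1) ^ 2 / 8) := by
      have := hmgf _ hmem
      simpa [hG] using this
    have hcondnn : ∀ᵐ ω ∂μ, 0 ≤ (μ[G|𝓕 n]) ω := by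
      have : (0 : Ω → ℝ) ≤ᵐ[μ] μ[G|𝓕 n] :=
        condExp_nonneg (Filter.Eventually.of_forall (fun ω => by rw [hG]; positivity))
      filter_upwards [this] with ω h using h
    have hFnn : ∀ ω, 0 ≤ F ω := fun ω => by rw [hF]; positivity
    have hint2 : Integrable (F * μ[G|𝓕 n]) μ := by
      refine AH.integrable_of_ae_bdd (M := MF * MG)
        (hFm0.mul (stronglyMeasurable_condExp.mono (𝓕.le n)).aestronglyMeasurable) ?_
      have hcondbd2 : ∀ᵐ ω ∂μ, |(μ[G|𝓕 n]) ω| ≤ MG := by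
        have hup : μ[G|𝓕 n] ≤ᵐ[μ] μ[fun _ => MG|𝓕 n] :=
          condExp_mono hGint (integrable_const _)
            (by filter_upwards [hGbdd] with ω h using (abs_le.1 h).2)
        have hconst : μ[fun _ : Ω => MG|𝓕 n] = fun _ => MG := condExp_const (𝓕.le n) _
        filter_upwards [hup, hcondnn] with ω h1 h2
        rw [abs_of_nonneg h2]
        rw [hconst] at h1
        exact h1
      filter_upwards [hFbdd, hcondbd2] with ω h1 h2
      rw [Pi.mul_apply, abs_mul]
      exact mul_le_mul h1 h2 (abs_nonneg _) (le_trans (abs_nonneg _) h1)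
    calc ∫ ω, (F * G) ω ∂μ = ∫ ω, (μ[F * G|𝓕 n]) ω ∂μ := htower
      _ = ∫ ω, (F * μ[G|𝓕 n]) ω ∂μ := integral_congr_ae hpull
      _ ≤ ∫ ω, F ω * Real.exp (l ^ 2 * R (n + 1) ^ 2 / 8) ∂μ := by
          refine integral_mono_ae hint2 (hFint.mul_const _) ?_
          filter_upwards [hcondbd] with ω h
          rw [Pi.mul_apply]
          exact mul_le_mul_of_nonneg_left h (hFnn ω)
      _ = (∫ ω, F ω ∂μ) * Real.exp (l ^ 2 * R (n + 1) ^ 2 / 8) := integral_mul_const _ _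
      _ ≤ Real.exp (∑ k ∈ Finset.Icc 1 n, l ^ 2 * R k ^ 2 / 8)
            * Real.exp (l ^ 2 * R (n + 1) ^ 2 / 8) := by
          have hIH : ∫ ω, F ω ∂μ ≤ Real.exp (∑ k ∈ Finset.Icc 1 n, l ^ 2 * R k ^ 2 / 8) := by
            rw [hF]; exact IH'
          exact mul_le_mul_of_nonneg_right hIH (exp_pos _).le
      _ = Real.exp (∑ k ∈ Finset.Icc 1 (n + 1), l ^ 2 * R k ^ 2 / 8) := by
          rw [← Real.exp_add]
          congr 1
          exact (Finset.sum_Icc_succ_top (by omega) _).symm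

end MGFSum

lemma AH.chernoff_arith {σ2 σ' r s l : ℝ} (hσ2pos : 0 < σ2) (hσ'2 : σ' ^ 2 = σ2)
    (hs : s = (2 * r - 1) * σ') (hl : l = s / σ2) :
    l ^ 2 * σ2 / 2 - l * s = -(2 * r - 1) ^ 2 / 2 := by
  have hσ2ne : σ2 ≠ 0 := hσ2pos.ne'
  have hls : l * s = (2 * r - 1) ^ 2 := by
    rw [hl, div_mul_eq_mul_div, hs]
    rw [show (2 * r - 1) * σ' * ((2 * r - 1) * σ') = (2 * r - 1) ^ 2 * σ' ^ 2 by ring, hσ'2]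
    field_simp
  have hl2 : l ^ 2 * σ2 = l * (l * σ2) := by ring
  have hlσ : l * σ2 = s := by rw [hl]; field_simp
  rw [hl2, hlσ, hls]
  linarith

lemma AH.final_numeric {L r δ : ℝ} (hδ0 : 0 < δ) (hδ1 : δ < 1)
    (hLdef : L = Real.log (4 / δ)) (hr2 : r ^ 2 = L) :
    Real.exp (-(2 * r - 1) ^ 2 / 2) ≤ δ := by
  rw [← Real.le_log_iff_exp_le hδ0]
  have hsplit : L = Real.log 4 - Real.log δ := by
    rw [hLdef, Real.log_div (by norm_num) hδ0.ne']
  have hlogδ : Real.log δ = Real.log 4 - L := by linarith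
  rw [hlogδ]
  have h4 : (1 : ℝ) < Real.log 4 := by
    rw [Real.lt_log_iff_exp_lt (by norm_num : (0:ℝ) < 4)]
    exact lt_trans Real.exp_one_lt_d9 (by norm_num)
  nlinarith [sq_nonneg (r - 1), hr2]

set_option maxHeartbeats 1000000 in
/-- Vector-valued Azuma–Hoeffding inequality (Pinelis): for an `ℝ^d`-valued martingale
difference sequence `ε_1, …, ε_K` with `‖ε_k‖ ≤ B_k` almost surely, with probability at
least `1 - δ` one has `‖∑ ε_k‖² ≤ 4 log(4/δ) ∑ B_k²`. -/
theorem azuma_hoeffding_vector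
    {Ω : Type*} {m0 : MeasurableSpace Ω} {P : Measure Ω} [IsProbabilityMeasure P]
    {d K : ℕ} (𝓕 : Filtration ℕ m0)
    (ε : ℕ → Ω → EuclideanSpace ℝ (Fin d)) (B : ℕ → ℝ)
    (hB : ∀ k, k ∈ Finset.Icc 1 K → 0 ≤ B k)
    (hmeas : ∀ k, k ∈ Finset.Icc 1 K → StronglyMeasurable[𝓕 k] (ε k))
    (hcond : ∀ k, k ∈ Finset.Icc 1 K → P[ε k | 𝓕 (k - 1)] =ᵐ[P] 0)
    (hbound : ∀ k, k ∈ Finset.Icc 1 K → ∀ᵐ ω ∂P, ‖ε k ω‖ ≤ B k)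
    (δ : ℝ) (hδ : δ ∈ Set.Ioo (0 : ℝ) 1) :
    ENNReal.ofReal (1 - δ) ≤
      P {ω | ‖∑ k ∈ Finset.Icc 1 K, ε k ω‖ ^ 2 ≤
        4 * Real.log (4 / δ) * ∑ k ∈ Finset.Icc 1 K, (B k) ^ 2} := by
  obtain ⟨hδ0, hδ1⟩ := hδ
  obtain ⟨L, hLdef⟩ : ∃ L : ℝ, L = Real.log (4 / δ) := ⟨_, rfl⟩
  obtain ⟨σ2, hσ2⟩ : ∃ x : ℝ, x = ∑ k ∈ Finset.Icc 1 K, B k ^ 2 := ⟨_, rfl⟩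
  obtain ⟨T, hT⟩ : ∃ x : ℝ, x = ∑ k ∈ Finset.Icc 1 K, B k := ⟨_, rfl⟩
  -- numeric facts about L
  have hL1 : 1 < L := by
    have h4 : (1 : ℝ) < Real.log 4 := by
      rw [Real.lt_log_iff_exp_lt (by norm_num : (0:ℝ) < 4)]
      exact lt_trans Real.exp_one_lt_d9 (by norm_num)
    have hsplit : L = Real.log 4 - Real.log δ := by
      rw [hLdef, Real.log_div (by norm_num) hδ0.ne']
    have hneg : Real.log δ < 0 := Real.log_neg hδ0 hδ1
    rw [hsplit]; linarith
  have hLpos : 0 < L := by linarith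
  have hσ2nn : 0 ≤ σ2 := by rw [hσ2]; positivity
  have hTnn : 0 ≤ T := by
    rw [hT]; exact Finset.sum_nonneg (fun k hk => hB k hk)
  -- trivial case : σ2 = 0
  rcases eq_or_lt_of_le hσ2nn with hz | hσ2pos
  · have hBz : ∀ k ∈ Finset.Icc 1 K, B k = 0 := by
      intro k hk
      have h0 : ∑ j ∈ Finset.Icc 1 K, B j ^ 2 = 0 := by rw [← hσ2, ← hz]
      have := (Finset.sum_eq_zero_iff_of_nonneg (fun i _ => sq_nonneg (B i))).1 h0 k hk
      exact pow_eq_zero_iff (by norm_num) |>.1 this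
    have hb : ∀ᵐ ω ∂P, ∀ k ∈ Finset.Icc 1 K, ‖ε k ω‖ ≤ B k := by
      rw [Filter.eventually_all_finset]; exact hbound
    have hmem : ∀ᵐ ω ∂P, ω ∈ {ω | ‖∑ k ∈ Finset.Icc 1 K, ε k ω‖ ^ 2 ≤
        4 * Real.log (4 / δ) * ∑ k ∈ Finset.Icc 1 K, (B k) ^ 2} := by
      filter_upwards [hb] with ω hω
      have hsum0 : ∑ k ∈ Finset.Icc 1 K, ε k ω = 0 := by
        apply Finset.sum_eq_zero
        intro k hk
        have h1 := hω k hk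
        rw [hBz k hk] at h1
        exact norm_le_zero_iff.1 h1
      simp only [Set.mem_setOf_eq, hsum0, norm_zero]
      rw [← hσ2, ← hz]
      norm_num
    calc ENNReal.ofReal (1 - δ) ≤ 1 := ENNReal.ofReal_le_one.2 (by linarith)
      _ = P Set.univ := measure_univ.symm
      _ ≤ _ := measure_mono_ae (by filter_upwards [hmem] with ω h using fun _ => h)
  -- main case
  obtain ⟨σ', hσ'⟩ : ∃ x : ℝ, x = Real.sqrt σ2 := ⟨_, rfl⟩
  obtain ⟨r, hr⟩ : ∃ x : ℝ, x = Real.sqrt L := ⟨_, rfl⟩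
  obtain ⟨s, hs⟩ : ∃ x : ℝ, x = (2 * r - 1) * σ' := ⟨_, rfl⟩
  obtain ⟨l, hl⟩ : ∃ x : ℝ, x = s / σ2 := ⟨_, rfl⟩
  have hr2 : r ^ 2 = L := by rw [hr]; exact Real.sq_sqrt hLpos.le
  have hr1 : 1 < r := by
    have := Real.sqrt_lt_sqrt (by norm_num : (0:ℝ) ≤ 1) hL1
    rwa [Real.sqrt_one, ← hr] at this
  have hσ'pos : 0 < σ' := by rw [hσ']; exact Real.sqrt_pos.2 hσ2pos
  have hσ'2 : σ' ^ 2 = σ2 := by rw [hσ']; exact Real.sq_sqrt hσ2pos.le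
  have hspos : 0 < s := by rw [hs]; nlinarith
  have hlpos : 0 < l := by rw [hl]; exact div_pos hspos hσ2pos
  have hFle : ∀ n, (𝓕 n : MeasurableSpace Ω) ≤ m0 := fun n => 𝓕.le n
  -- partial sums
  obtain ⟨S, hSdef⟩ : ∃ S : ℕ → Ω → EuclideanSpace ℝ (Fin d),
      ∀ n ω, S n ω = ∑ k ∈ Finset.Icc 1 n, ε k ω := ⟨_, fun n ω => rfl⟩
  obtain ⟨A, hAdef⟩ : ∃ A : ℕ → ℝ, ∀ n, A n = ∑ k ∈ Finset.Icc (n + 1) K, B k ^ 2 :=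
    ⟨_, fun n => rfl⟩
  obtain ⟨W, hWdef⟩ : ∃ W : ℕ → Ω → ℝ,
      ∀ n ω, W n ω = Real.sqrt (‖S n ω‖ ^ 2 + A n) := ⟨_, fun n ω => rfl⟩
  have hSfun : ∀ n, S n = fun ω => ∑ k ∈ Finset.Icc 1 n, ε k ω := by
    intro n; funext ω; rw [hSdef]
  have hWfun : ∀ n, W n = fun ω => Real.sqrt (‖S n ω‖ ^ 2 + A n) := by
    intro n; funext ω; rw [hWdef]
  have hSmeas : ∀ n, n ≤ K → StronglyMeasurable[𝓕 n] (S n) := by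
    intro n hn
    rw [hSfun]
    refine Finset.stronglyMeasurable_fun_sum _ (fun k hk => ?_)
    have hk' := Finset.mem_Icc.1 hk
    exact (hmeas k (Finset.mem_Icc.2 ⟨hk'.1, le_trans hk'.2 hn⟩)).mono (𝓕.mono hk'.2)
  have hb : ∀ᵐ ω ∂P, ∀ k ∈ Finset.Icc 1 K, ‖ε k ω‖ ≤ B k := by
    rw [Filter.eventually_all_finset]; exact hbound
  have hSb : ∀ᵐ ω ∂P, ∀ n, n ≤ K → ‖S n ω‖ ≤ T := by
    filter_upwards [hb] with ω hω n hn
    rw [hSdef, hT]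
    calc ‖∑ k ∈ Finset.Icc 1 n, ε k ω‖ ≤ ∑ k ∈ Finset.Icc 1 n, ‖ε k ω‖ := norm_sum_le _ _
      _ ≤ ∑ k ∈ Finset.Icc 1 n, B k := by
          refine Finset.sum_le_sum (fun k hk => ?_)
          have hk' := Finset.mem_Icc.1 hk
          exact hω k (Finset.mem_Icc.2 ⟨hk'.1, le_trans hk'.2 hn⟩)
      _ ≤ ∑ k ∈ Finset.Icc 1 K, B k :=
          Finset.sum_le_sum_of_subset_of_nonneg (Finset.Icc_subset_Icc le_rfl hn)
            (fun k hk _ => hB k hk)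
  -- facts about A
  have hAnn : ∀ n, 0 ≤ A n := by intro n; rw [hAdef]; positivity
  have hAle : ∀ n, A n ≤ σ2 := by
    intro n
    rw [hAdef, hσ2]
    refine Finset.sum_le_sum_of_subset_of_nonneg (Finset.Icc_subset_Icc (by omega) le_rfl)
      (fun k _ _ => sq_nonneg _)
  have hA0 : A 0 = σ2 := by rw [hAdef, hσ2]
  have hAK : A K = 0 := by
    rw [hAdef, Finset.Icc_eq_empty (by omega), Finset.sum_empty]
  have hAstep : ∀ j, j + 1 ≤ K → A j = B (j + 1) ^ 2 + A (j + 1) := by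
    intro j hj
    rw [hAdef, hAdef]
    have hins : Finset.Icc (j + 1) K = insert (j + 1) (Finset.Icc (j + 2) K) := by
      ext x; simp only [Finset.mem_Icc, Finset.mem_insert]; omega
    rw [hins, Finset.sum_insert (by simp only [Finset.mem_Icc]; omega)]
  -- facts about W
  have hWmeas : ∀ n, n ≤ K → StronglyMeasurable[𝓕 n] (W n) := by
    intro n hn
    rw [hWfun]
    apply Real.continuous_sqrt.comp_stronglyMeasurable
    have h1 := (hSmeas n hn).norm
    have h2 : (fun ω => ‖S n ω‖ ^ 2 + A n) = fun ω => ‖S n ω‖ * ‖S n ω‖ + A n := by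
      funext ω; ring
    rw [h2]
    exact (h1.mul h1).add_const (A n)
  have hWnn : ∀ n ω, 0 ≤ W n ω := by
    intro n ω; rw [hWdef]; exact Real.sqrt_nonneg _
  obtain ⟨MW, hMW⟩ : ∃ x : ℝ, x = Real.sqrt (T ^ 2 + σ2) := ⟨_, rfl⟩
  have hWb : ∀ᵐ ω ∂P, ∀ n, n ≤ K → W n ω ≤ MW := by
    filter_upwards [hSb] with ω hω n hn
    rw [hWdef, hMW]
    apply Real.sqrt_le_sqrt
    have h1 := hω n hn
    nlinarith [norm_nonneg (S n ω), hAle n]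
  have hWint : ∀ n, n ≤ K → Integrable (W n) P := by
    intro n hn
    refine AH.integrable_of_ae_bdd (M := MW)
      (((hWmeas n hn).mono (hFle n)).aestronglyMeasurable) ?_
    filter_upwards [hWb] with ω hω
    rw [abs_of_nonneg (hWnn n ω)]
    exact hω n hn
  have hMWnn : 0 ≤ MW := by rw [hMW]; exact Real.sqrt_nonneg _
  -- conditional means and differences
  obtain ⟨m', hm'def⟩ : ∃ m' : ℕ → Ω → ℝ, ∀ k, m' k = P[W k | 𝓕 (k - 1)] := ⟨_, fun k => rfl⟩
  obtain ⟨D, hDdef⟩ : ∃ D : ℕ → Ω → ℝ, ∀ k, D k = fun ω => W k ω - m' k ω := ⟨_, fun k => rfl⟩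
  have hDptw : ∀ k ω, D k ω = W k ω - m' k ω := by
    intro k ω; rw [hDdef]
  have hm'meas : ∀ k, StronglyMeasurable[𝓕 (k - 1)] (m' k) := by
    intro k; rw [hm'def]; exact stronglyMeasurable_condExp
  have hm'nn : ∀ k, ∀ᵐ ω ∂P, 0 ≤ m' k ω := by
    intro k
    rw [hm'def]
    have : (0 : Ω → ℝ) ≤ᵐ[P] P[W k|𝓕 (k - 1)] :=
      condExp_nonneg (Filter.Eventually.of_forall (fun ω => hWnn k ω))
    filter_upwards [this] with ω h using h
  have hm'b : ∀ k, k ≤ K → ∀ᵐ ω ∂P, m' k ω ≤ MW := by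
    intro k hk
    rw [hm'def]
    have h1 : P[W k|𝓕 (k - 1)] ≤ᵐ[P] P[fun _ => MW|𝓕 (k - 1)] := by
      refine condExp_mono (hWint k hk) (integrable_const _) ?_
      filter_upwards [hWb] with ω hω using hω k hk
    have h2 : P[fun _ : Ω => MW|𝓕 (k - 1)] = fun _ => MW := condExp_const (hFle _) _
    filter_upwards [h1] with ω hω
    rw [h2] at hω
    exact hω
  have hm'int : ∀ k, k ≤ K → Integrable (m' k) P := by
    intro k hk
    refine AH.integrable_of_ae_bdd (M := MW)
      (((hm'meas k).mono (hFle _)).aestronglyMeasurable) ?_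
    filter_upwards [hm'nn k, hm'b k hk] with ω h1 h2
    rw [abs_of_nonneg h1]; exact h2
  -- lower endpoints
  obtain ⟨c', hc'def⟩ : ∃ c' : ℕ → Ω → ℝ,
      ∀ k ω, c' k ω = Real.sqrt ((max 0 (‖S (k - 1) ω‖ - B k)) ^ 2 + A k) :=
    ⟨_, fun k ω => rfl⟩
  have hc'fun : ∀ k, c' k = fun ω => Real.sqrt ((max 0 (‖S (k - 1) ω‖ - B k)) ^ 2 + A k) := by
    intro k; funext ω; rw [hc'def]
  have hc'meas : ∀ k, k ≤ K → StronglyMeasurable[𝓕 (k - 1)] (c' k) := by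
    intro k hk
    rw [hc'fun]
    apply Real.continuous_sqrt.comp_stronglyMeasurable
    have h0 : StronglyMeasurable[𝓕 (k - 1)] (fun ω => ‖S (k - 1) ω‖ - B k) := by
      have := (hSmeas (k - 1) (by omega)).norm.add_const (-(B k))
      have he : (fun ω => ‖S (k - 1) ω‖ - B k) = fun ω => ‖S (k - 1) ω‖ + -(B k) := by
        funext ω; ring
      rw [he]; exact this
    have h1 : StronglyMeasurable[𝓕 (k - 1)] (fun ω => max 0 (‖S (k - 1) ω‖ - B k)) :=
      (continuous_const.max continuous_id).comp_stronglyMeasurable h0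
    have h2 : (fun ω => (max 0 (‖S (k - 1) ω‖ - B k)) ^ 2 + A k)
        = fun ω => (max 0 (‖S (k - 1) ω‖ - B k)) * (max 0 (‖S (k - 1) ω‖ - B k)) + A k := by
      funext ω; ring
    rw [h2]
    exact (h1.mul h1).add_const (A k)
  have hc'nn : ∀ k ω, 0 ≤ c' k ω := by
    intro k ω; rw [hc'def]; exact Real.sqrt_nonneg _
  have hc'b : ∀ k, k ∈ Finset.Icc 1 K → ∀ᵐ ω ∂P, c' k ω ≤ MW := by
    intro k hk
    have hk' := Finset.mem_Icc.1 hk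
    filter_upwards [hSb] with ω hω
    rw [hc'def, hMW]
    apply Real.sqrt_le_sqrt
    have h1 := hω (k - 1) (by omega)
    have hBk := hB k hk
    have hmax : max 0 (‖S (k - 1) ω‖ - B k) ≤ T := by
      apply max_le hTnn
      have := norm_nonneg (S (k - 1) ω)
      linarith
    have hmaxnn : 0 ≤ max 0 (‖S (k - 1) ω‖ - B k) := le_max_left _ _
    nlinarith [hAle k]
  have hc'int : ∀ k, k ∈ Finset.Icc 1 K → Integrable (c' k) P := by
    intro k hk
    refine AH.integrable_of_ae_bdd (M := MW)
      (((hc'meas k (Finset.mem_Icc.1 hk).2).mono (hFle _)).aestronglyMeasurable) ?_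
    filter_upwards [hc'b k hk] with ω hω
    rw [abs_of_nonneg (hc'nn k ω)]; exact hω
  -- range of W k
  have hrangeW : ∀ k, k ∈ Finset.Icc 1 K →
      ∀ᵐ ω ∂P, c' k ω ≤ W k ω ∧ W k ω ≤ c' k ω + 2 * B k := by
    intro k hk
    have hk' := Finset.mem_Icc.1 hk
    obtain ⟨j, rfl⟩ : ∃ j, k = j + 1 := ⟨k - 1, by omega⟩
    have hj : j + 1 - 1 = j := by omega
    have hBnn : 0 ≤ B (j + 1) := hB _ hk
    filter_upwards [hb] with ω hω
    have hε : ‖ε (j + 1) ω‖ ≤ B (j + 1) := hω _ hk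
    have hSsucc : S (j + 1) ω = S j ω + ε (j + 1) ω := by
      rw [hSdef, hSdef]
      exact Finset.sum_Icc_succ_top (by omega) _
    have hunn : 0 ≤ ‖S j ω‖ := norm_nonneg _
    have hup : ‖S (j + 1) ω‖ ≤ ‖S j ω‖ + B (j + 1) := by
      rw [hSsucc]
      exact (norm_add_le _ _).trans (by linarith)
    have hlo : max 0 (‖S j ω‖ - B (j + 1)) ≤ ‖S (j + 1) ω‖ := by
      apply max_le (norm_nonneg _)
      have h2 : ‖S j ω‖ ≤ ‖S (j + 1) ω‖ + ‖ε (j + 1) ω‖ := by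
        have h3 := norm_sub_le (S (j + 1) ω) (ε (j + 1) ω)
        rw [hSsucc] at h3 ⊢
        simpa using h3
      linarith
    constructor
    · rw [hc'def, hWdef, hj]
      apply Real.sqrt_le_sqrt
      have h2 : (max 0 (‖S j ω‖ - B (j + 1))) ^ 2 ≤ ‖S (j + 1) ω‖ ^ 2 :=
        pow_le_pow_left₀ (le_max_left 0 _) hlo 2
      linarith
    · rw [hc'def, hWdef, hj]
      have step1 : Real.sqrt (‖S (j + 1) ω‖ ^ 2 + A (j + 1))
          ≤ Real.sqrt ((‖S j ω‖ + B (j + 1)) ^ 2 + A (j + 1)) :=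
        Real.sqrt_le_sqrt (by
          have h2 := pow_le_pow_left₀ (norm_nonneg (S (j + 1) ω)) hup 2
          linarith)
      have step2 := AH.sqrt_lip (hAnn (j + 1)) (le_max_left 0 (‖S j ω‖ - B (j + 1)))
        (show max 0 (‖S j ω‖ - B (j + 1)) ≤ ‖S j ω‖ + B (j + 1) by
          apply max_le <;> linarith)
      have step3 : ‖S j ω‖ + B (j + 1) - max 0 (‖S j ω‖ - B (j + 1)) ≤ 2 * B (j + 1) := by
        rcases le_total (‖S j ω‖ - B (j + 1)) 0 with h | h
        · rw [max_eq_left h]; linarith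
        · rw [max_eq_right h]; linarith
      linarith [step1, step2]
  -- m' in same range
  have hrangem' : ∀ k, k ∈ Finset.Icc 1 K →
      ∀ᵐ ω ∂P, c' k ω ≤ m' k ω ∧ m' k ω ≤ c' k ω + 2 * B k := by
    intro k hk
    have hk' := Finset.mem_Icc.1 hk
    have hc'e : P[c' k|𝓕 (k - 1)] = c' k :=
      condExp_of_stronglyMeasurable (hFle _) (hc'meas k hk'.2) (hc'int k hk)
    have hlow : P[c' k|𝓕 (k - 1)] ≤ᵐ[P] P[W k|𝓕 (k - 1)] :=
      condExp_mono (hc'int k hk) (hWint k hk'.2)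
        (by filter_upwards [hrangeW k hk] with ω h using h.1)
    have hupint : Integrable (fun ω => c' k ω + 2 * B k) P :=
      (hc'int k hk).add (integrable_const _)
    have hupe : P[fun ω => c' k ω + 2 * B k|𝓕 (k - 1)] = fun ω => c' k ω + 2 * B k := by
      refine condExp_of_stronglyMeasurable (hFle _)
        ((hc'meas k hk'.2).add_const _) hupint
    have hup : P[W k|𝓕 (k - 1)] ≤ᵐ[P] P[fun ω => c' k ω + 2 * B k|𝓕 (k - 1)] :=
      condExp_mono (hWint k hk'.2) hupint
        (by filter_upwards [hrangeW k hk] with ω h using h.2)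
    filter_upwards [hlow, hup] with ω h1 h2
    rw [hc'e] at h1
    rw [hupe] at h2
    rw [hm'def]
    exact ⟨h1, h2⟩
  -- drift : m' k ≤ W (k-1)
  have hdrift : ∀ k, k ∈ Finset.Icc 1 K → ∀ᵐ ω ∂P, m' k ω ≤ W (k - 1) ω := by
    intro k hk
    have hk' := Finset.mem_Icc.1 hk
    obtain ⟨j, rfl⟩ : ∃ j, k = j + 1 := ⟨k - 1, by omega⟩
    have hj : j + 1 - 1 = j := by omega
    have hjK : j + 1 ≤ K := hk'.2
    have hBnn : 0 ≤ B (j + 1) := hB _ hk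
    -- decompose W (j+1)^2
    have hWsq : (fun ω => W (j + 1) ω ^ 2)
        = fun ω => (‖S j ω‖ ^ 2 + A (j + 1))
            + ((2 : ℝ) * (inner ℝ (S j ω) (ε (j + 1) ω) : ℝ) + ‖ε (j + 1) ω‖ ^ 2) := by
      funext ω
      rw [hWdef, Real.sq_sqrt (add_nonneg (sq_nonneg _) (hAnn _))]
      have hSsucc : S (j + 1) ω = S j ω + ε (j + 1) ω := by
        rw [hSdef, hSdef]
        exact Finset.sum_Icc_succ_top (by omega) _
      rw [hSsucc, norm_add_sq_real]
      ring
    -- integrability of pieces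
    have hg0meas : StronglyMeasurable[𝓕 j] (fun ω => ‖S j ω‖ ^ 2 + A (j + 1)) := by
      have h1 := (hSmeas j (by omega)).norm
      have h2 : (fun ω => ‖S j ω‖ ^ 2 + A (j + 1))
          = fun ω => ‖S j ω‖ * ‖S j ω‖ + A (j + 1) := by funext ω; ring
      rw [h2]
      exact (h1.mul h1).add_const _
    have hg0int : Integrable (fun ω => ‖S j ω‖ ^ 2 + A (j + 1)) P := by
      refine AH.integrable_of_ae_bdd (M := T ^ 2 + σ2)
        ((hg0meas.mono (hFle j)).aestronglyMeasurable) ?_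
      filter_upwards [hSb] with ω hω
      have h1 := hω j (by omega)
      have h2 := norm_nonneg (S j ω)
      rw [abs_of_nonneg (add_nonneg (sq_nonneg _) (hAnn _))]
      nlinarith [hAle (j + 1)]
    have hεm : AEStronglyMeasurable (ε (j + 1)) P :=
      ((hmeas _ hk).mono (hFle _)).aestronglyMeasurable
    have hinnm : AEStronglyMeasurable (fun ω => (inner ℝ (S j ω) (ε (j + 1) ω) : ℝ)) P := by
      exact (((hSmeas j (by omega)).mono (hFle j)).aestronglyMeasurable.inner hεm)
    have hinnb : ∀ᵐ ω ∂P, |(inner ℝ (S j ω) (ε (j + 1) ω) : ℝ)| ≤ T * B (j + 1) := by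
      filter_upwards [hSb, hb] with ω h1 h2
      calc |(inner ℝ (S j ω) (ε (j + 1) ω) : ℝ)| ≤ ‖S j ω‖ * ‖ε (j + 1) ω‖ :=
            abs_real_inner_le_norm _ _
        _ ≤ T * B (j + 1) := by
            have := norm_nonneg (S j ω)
            have := norm_nonneg (ε (j + 1) ω)
            exact mul_le_mul (h1 j (by omega)) (h2 _ hk) (norm_nonneg _) hTnn
    have hinnint : Integrable (fun ω => (inner ℝ (S j ω) (ε (j + 1) ω) : ℝ)) P :=
      AH.integrable_of_ae_bdd hinnm hinnb
    have h2innint : Integrable (fun ω => (2 : ℝ) * (inner ℝ (S j ω) (ε (j + 1) ω) : ℝ)) P := by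
      simpa using hinnint.const_mul (2 : ℝ)
    have hsqεm : AEStronglyMeasurable (fun ω => ‖ε (j + 1) ω‖ ^ 2) P := by
      have h1 := hεm.norm
      have h2 : (fun ω => ‖ε (j + 1) ω‖ ^ 2) = fun ω => ‖ε (j + 1) ω‖ * ‖ε (j + 1) ω‖ := by
        funext ω; ring
      rw [h2]
      exact h1.mul h1
    have hsqεb : ∀ᵐ ω ∂P, |‖ε (j + 1) ω‖ ^ 2| ≤ B (j + 1) ^ 2 := by
      filter_upwards [hb] with ω hω
      have h1 := hω _ hk
      have h2 := norm_nonneg (ε (j + 1) ω)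
      rw [abs_of_nonneg (by positivity)]
      nlinarith
    have hsqεint : Integrable (fun ω => ‖ε (j + 1) ω‖ ^ 2) P :=
      AH.integrable_of_ae_bdd hsqεm hsqεb
    have hrest_int : Integrable (fun ω => (2 : ℝ) * (inner ℝ (S j ω) (ε (j + 1) ω) : ℝ)
        + ‖ε (j + 1) ω‖ ^ 2) P := h2innint.add hsqεint
    -- conditional expectation of W^2
    have hcondW2 : P[fun ω => W (j + 1) ω ^ 2|𝓕 j] ≤ᵐ[P] fun ω => W j ω ^ 2 := by
      have he1 : P[fun ω => W (j + 1) ω ^ 2|𝓕 j]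
          =ᵐ[P] P[fun ω => ‖S j ω‖ ^ 2 + A (j + 1)|𝓕 j]
            + P[fun ω => (2 : ℝ) * (inner ℝ (S j ω) (ε (j + 1) ω) : ℝ)
                + ‖ε (j + 1) ω‖ ^ 2|𝓕 j] := by
        rw [hWsq]
        exact condExp_add hg0int hrest_int _
      have he2 : P[fun ω => ‖S j ω‖ ^ 2 + A (j + 1)|𝓕 j] = fun ω => ‖S j ω‖ ^ 2 + A (j + 1) :=
        condExp_of_stronglyMeasurable (hFle j) hg0meas hg0int
      have he3 : P[fun ω => (2 : ℝ) * (inner ℝ (S j ω) (ε (j + 1) ω) : ℝ)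
            + ‖ε (j + 1) ω‖ ^ 2|𝓕 j]
          =ᵐ[P] P[fun ω => (2 : ℝ) * (inner ℝ (S j ω) (ε (j + 1) ω) : ℝ)|𝓕 j]
            + P[fun ω => ‖ε (j + 1) ω‖ ^ 2|𝓕 j] := condExp_add h2innint hsqεint _
      have hcondε : P[ε (j + 1)|𝓕 j] =ᵐ[P] 0 := by
        have := hcond _ hk
        rwa [hj] at this
      have he4 : P[fun ω => (inner ℝ (S j ω) (ε (j + 1) ω) : ℝ)|𝓕 j] =ᵐ[P] 0 := by
        refine AH.condExp_inner_zero (hFle j) (Mv := T) (Mg := B (j + 1))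
          (hSmeas j (by omega)) ?_ hεm ?_ hcondε
        · filter_upwards [hSb] with ω hω using hω j (by omega)
        · filter_upwards [hb] with ω hω using hω _ hk
      have he5 : P[fun ω => (2 : ℝ) * (inner ℝ (S j ω) (ε (j + 1) ω) : ℝ)|𝓕 j] =ᵐ[P] 0 := by
        have hsmul := condExp_smul (μ := P) (m := 𝓕 j) (2 : ℝ)
          (fun ω => (inner ℝ (S j ω) (ε (j + 1) ω) : ℝ))
        refine hsmul.trans ?_
        filter_upwards [he4] with ω hω
        simp only [Pi.smul_apply, smul_eq_mul, Pi.zero_apply] at hω ⊢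
        rw [hω]; ring
      have he6 : P[fun ω => ‖ε (j + 1) ω‖ ^ 2|𝓕 j] ≤ᵐ[P] fun _ => B (j + 1) ^ 2 := by
        have h1 : P[fun ω => ‖ε (j + 1) ω‖ ^ 2|𝓕 j] ≤ᵐ[P] P[fun _ => B (j + 1) ^ 2|𝓕 j] := by
          refine condExp_mono hsqεint (integrable_const _) ?_
          filter_upwards [hsqεb] with ω hω
          exact (abs_le.1 hω).2
        have h2 : P[fun _ : Ω => B (j + 1) ^ 2|𝓕 j] = fun _ => B (j + 1) ^ 2 :=
          condExp_const (hFle j) _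
        filter_upwards [h1] with ω hω
        rw [h2] at hω
        exact hω
      filter_upwards [he1, he3, he5, he6] with ω k1 k3 k5 k6
      have e2 : (P[fun ω => ‖S j ω‖ ^ 2 + A (j + 1)|𝓕 j]) ω = ‖S j ω‖ ^ 2 + A (j + 1) := by
        rw [he2]
      have hWj : W j ω ^ 2 = ‖S j ω‖ ^ 2 + A j := by
        rw [hWdef, Real.sq_sqrt (add_nonneg (sq_nonneg _) (hAnn _))]
      simp only [Pi.add_apply, Pi.zero_apply] at k1 k3 k5
      show _ ≤ W j ω ^ 2
      rw [hWj, hAstep j hjK, k1, e2, k3, k5]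
      linarith [k6]
    -- variance bound : (m' (j+1))^2 ≤ E[W^2]
    have hm'j := hm'meas (j + 1)
    rw [hj] at hm'j
    have hm'intj : Integrable (m' (j + 1)) P := hm'int (j + 1) hjK
    have hWintj : Integrable (W (j + 1)) P := hWint (j + 1) hjK
    have hW2int : Integrable (fun ω => W (j + 1) ω ^ 2) P := by
      refine AH.integrable_of_ae_bdd (M := MW ^ 2)
        (((hWmeas (j + 1) hjK).mono (hFle _)).aestronglyMeasurable.pow 2) ?_
      filter_upwards [hWb] with ω hω
      have h1 := hω (j + 1) hjK
      have h2 := hWnn (j + 1) ω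
      rw [abs_of_nonneg (by positivity)]
      nlinarith
    have hlhsint : Integrable (fun ω => 2 * m' (j + 1) ω * W (j + 1) ω - m' (j + 1) ω ^ 2) P := by
      refine AH.integrable_of_ae_bdd (M := 2 * MW * MW + MW ^ 2) ?_ ?_
      · have ham : AEStronglyMeasurable (m' (j + 1)) P :=
          ((hm'meas (j + 1)).mono (hFle _)).aestronglyMeasurable
        have haw : AEStronglyMeasurable (W (j + 1)) P :=
          ((hWmeas (j + 1) hjK).mono (hFle _)).aestronglyMeasurable
        exact ((ham.const_mul 2).mul haw).sub (ham.pow 2)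
      · filter_upwards [hm'nn (j + 1), hm'b (j + 1) hjK, hWb] with ω h1 h2 h3
        have h4 := hWnn (j + 1) ω
        have h5 := h3 (j + 1) hjK
        rw [abs_le]
        constructor <;> nlinarith
    have hvar : ∀ᵐ ω ∂P, m' (j + 1) ω ^ 2 ≤ (P[fun ω => W (j + 1) ω ^ 2|𝓕 j]) ω := by
      have hptwise : ∀ ω, 2 * m' (j + 1) ω * W (j + 1) ω - m' (j + 1) ω ^ 2
          ≤ W (j + 1) ω ^ 2 := by
        intro ω
        nlinarith [sq_nonneg (W (j + 1) ω - m' (j + 1) ω)]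
      have hmono : P[fun ω => 2 * m' (j + 1) ω * W (j + 1) ω - m' (j + 1) ω ^ 2|𝓕 j]
          ≤ᵐ[P] P[fun ω => W (j + 1) ω ^ 2|𝓕 j] :=
        condExp_mono hlhsint hW2int (Filter.Eventually.of_forall hptwise)
      -- compute the left side
      have hprodint : Integrable (fun ω => (2 * m' (j + 1) ω) * W (j + 1) ω) P := by
        refine AH.integrable_of_ae_bdd (M := 2 * MW * MW) ?_ ?_
        · have ham : AEStronglyMeasurable (m' (j + 1)) P :=
            ((hm'meas (j + 1)).mono (hFle _)).aestronglyMeasurable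
          have haw : AEStronglyMeasurable (W (j + 1)) P :=
            ((hWmeas (j + 1) hjK).mono (hFle _)).aestronglyMeasurable
          exact (ham.const_mul 2).mul haw
        · filter_upwards [hm'nn (j + 1), hm'b (j + 1) hjK, hWb] with ω h1 h2 h3
          have h4 := hWnn (j + 1) ω
          have h5 := h3 (j + 1) hjK
          rw [abs_le]
          constructor <;> nlinarith
      have hsqint : Integrable (fun ω => m' (j + 1) ω ^ 2) P := by
        refine AH.integrable_of_ae_bdd (M := MW ^ 2)
          (((hm'meas (j + 1)).mono (hFle _)).aestronglyMeasurable.pow 2) ?_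
        filter_upwards [hm'nn (j + 1), hm'b (j + 1) hjK] with ω h1 h2
        rw [abs_of_nonneg (by positivity)]
        nlinarith
      have hsplit : P[fun ω => 2 * m' (j + 1) ω * W (j + 1) ω - m' (j + 1) ω ^ 2|𝓕 j]
          =ᵐ[P] P[fun ω => (2 * m' (j + 1) ω) * W (j + 1) ω|𝓕 j]
            - P[fun ω => m' (j + 1) ω ^ 2|𝓕 j] := by
        have := condExp_sub (m := 𝓕 j) (μ := P) hprodint hsqint
        have harw : (fun ω => 2 * m' (j + 1) ω * W (j + 1) ω - m' (j + 1) ω ^ 2)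
            = (fun ω => (2 * m' (j + 1) ω) * W (j + 1) ω) - fun ω => m' (j + 1) ω ^ 2 := by
          funext ω; rfl
        rw [harw]
        exact this
      have hpull : P[fun ω => (2 * m' (j + 1) ω) * W (j + 1) ω|𝓕 j]
          =ᵐ[P] (fun ω => 2 * m' (j + 1) ω) * P[W (j + 1)|𝓕 j] := by
        have h2m : StronglyMeasurable[𝓕 j] (fun ω => 2 * m' (j + 1) ω) := hm'j.const_mul 2
        have := condExp_mul_of_stronglyMeasurable_left h2m (by
          have harw : (fun ω => 2 * m' (j + 1) ω) * W (j + 1)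
              = fun ω => (2 * m' (j + 1) ω) * W (j + 1) ω := rfl
          rw [harw]
          exact hprodint) hWintj
        exact this
      have hsqe : P[fun ω => m' (j + 1) ω ^ 2|𝓕 j] = fun ω => m' (j + 1) ω ^ 2 := by
        refine condExp_of_stronglyMeasurable (hFle j) (by
          have harw : (fun ω => m' (j + 1) ω ^ 2) = fun ω => m' (j + 1) ω * m' (j + 1) ω := by
            funext ω; ring
          rw [harw]
          exact hm'j.mul hm'j) hsqint
      have hWcond : P[W (j + 1)|𝓕 j] = m' (j + 1) := by
        rw [hm'def, hj]
      filter_upwards [hmono, hsplit, hpull] with ω k1 k2 k3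
      have kk : 2 * m' (j + 1) ω * m' (j + 1) ω - m' (j + 1) ω ^ 2
          ≤ (P[fun ω => W (j + 1) ω ^ 2|𝓕 j]) ω := by
        rw [k2] at k1
        simp only [Pi.sub_apply] at k1
        rw [k3] at k1
        simp only [Pi.mul_apply] at k1
        rw [hWcond, hsqe] at k1
        simpa using k1
      nlinarith [kk]
    filter_upwards [hvar, hcondW2, hm'nn (j + 1)] with ω k1 k2 k3
    rw [hj]
    have k4 : m' (j + 1) ω ^ 2 ≤ W j ω ^ 2 := le_trans k1 k2
    have k5 := hWnn j ω
    nlinarith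
  -- D facts
  have hDmeas : ∀ k, k ∈ Finset.Icc 1 K → StronglyMeasurable[𝓕 k] (D k) := by
    intro k hk
    have hk' := Finset.mem_Icc.1 hk
    rw [hDdef]
    exact (hWmeas k hk'.2).sub ((hm'meas k).mono (𝓕.mono (by omega)))
  have hDbdd : ∀ k, k ∈ Finset.Icc 1 K → ∀ᵐ ω ∂P, |D k ω| ≤ 2 * B k := by
    intro k hk
    filter_upwards [hrangeW k hk, hrangem' k hk] with ω h1 h2
    rw [hDptw, abs_le]
    constructor <;> [linarith [h1.1, h2.2]; linarith [h1.2, h2.1]]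
  have hDmean : ∀ k, k ∈ Finset.Icc 1 K → P[D k|𝓕 (k - 1)] =ᵐ[P] 0 := by
    intro k hk
    have hk' := Finset.mem_Icc.1 hk
    have hsub := condExp_sub (m := 𝓕 (k - 1)) (μ := P) (hWint k hk'.2) (hm'int k hk'.2)
    have harw : D k = W k - m' k := by
      rw [hDdef]; rfl
    rw [harw]
    refine hsub.trans ?_
    have hme : P[m' k|𝓕 (k - 1)] = m' k :=
      condExp_of_stronglyMeasurable (hFle _) (hm'meas k) (hm'int k hk'.2)
    have hWe : P[W k|𝓕 (k - 1)] = m' k := (hm'def k).symm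
    rw [hme, hWe]
    simp
  have hDmgf : ∀ k, k ∈ Finset.Icc 1 K → ∀ᵐ ω ∂P,
      (P[fun ω => Real.exp (l * D k ω)|𝓕 (k - 1)]) ω
        ≤ Real.exp (l ^ 2 * (2 * B k) ^ 2 / 8) := by
    intro k hk
    have hk' := Finset.mem_Icc.1 hk
    refine AH.cond_mgf (hFle (k - 1)) (X := D k) (a := fun ω => c' k ω - m' k ω)
      (c := 2 * B k) (M := 2 * MW) (by linarith [hB k hk]) hlpos
      ((hc'meas k hk'.2).sub (hm'meas k)) ?_
      (((hDmeas k hk).mono (hFle k)).aestronglyMeasurable) ?_ (hDmean k hk)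
    · filter_upwards [hc'b k hk, hm'nn k, hm'b k hk'.2] with ω h1 h2 h3
      have h4 := hc'nn k ω
      show |c' k ω - m' k ω| ≤ 2 * MW
      rw [abs_le]
      constructor <;> nlinarith
    · filter_upwards [hrangeW k hk, hrangem' k hk] with ω h1 h2
      show c' k ω - m' k ω ≤ D k ω ∧ D k ω ≤ c' k ω - m' k ω + 2 * B k
      rw [hDptw]
      constructor
      · linarith [h1.1, h2.2]
      · linarith [h1.2, h2.1]
  -- telescoping
  have hdall : ∀ᵐ ω ∂P, ∀ k ∈ Finset.Icc 1 K, m' k ω ≤ W (k - 1) ω := by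
    rw [Filter.eventually_all_finset]
    exact hdrift
  have htel : ∀ᵐ ω ∂P, ‖S K ω‖ ≤ σ' + ∑ k ∈ Finset.Icc 1 K, D k ω := by
    filter_upwards [hdall] with ω hω
    have htelsum : ∑ j ∈ Finset.range K, (W (j + 1) ω - W j ω) = W K ω - W 0 ω :=
      Finset.sum_range_sub (fun j => W j ω) K
    have hWK : W K ω = ‖S K ω‖ := by
      rw [hWdef, hAK, add_zero, Real.sqrt_sq (norm_nonneg _)]
    have hW0 : W 0 ω = σ' := by
      rw [hWdef, hA0, hσ']
      have h0 : S 0 ω = 0 := by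
        rw [hSdef, Finset.Icc_eq_empty (by omega), Finset.sum_empty]
      rw [h0, norm_zero]
      norm_num
    have hconv : ∑ k ∈ Finset.Icc 1 K, D k ω = ∑ j ∈ Finset.range K, D (1 + j) ω := by
      rw [← Finset.Ico_add_one_right_eq_Icc, Finset.sum_Ico_eq_sum_range]
      simp
    have hterm : ∀ j ∈ Finset.range K, W (j + 1) ω - W j ω ≤ D (1 + j) ω := by
      intro j hj
      have hjK : j + 1 ≤ K := by
        have := Finset.mem_range.1 hj; omega
      have h1 : m' (j + 1) ω ≤ W j ω := by
        have := hω (j + 1) (Finset.mem_Icc.2 ⟨by omega, hjK⟩)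
        simpa using this
      rw [show 1 + j = j + 1 by omega, hDptw]
      linarith
    have hsum : ∑ j ∈ Finset.range K, (W (j + 1) ω - W j ω)
        ≤ ∑ j ∈ Finset.range K, D (1 + j) ω := Finset.sum_le_sum hterm
    rw [htelsum, hWK, hW0] at hsum
    rw [hconv]
    linarith
  -- Chernoff bound
  obtain ⟨R, hRdef⟩ : ∃ R : ℕ → ℝ, ∀ k, R k = 2 * B k := ⟨_, fun k => rfl⟩
  have hmgfsum := AH.mgf_sum 𝓕 D R l K hDmeas
    (fun k hk => by rw [hRdef]; exact hDbdd k hk)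
    (fun k hk => by rw [hRdef]; exact hDmgf k hk)
  have hsumC : ∑ k ∈ Finset.Icc 1 K, l ^ 2 * R k ^ 2 / 8 = l ^ 2 * σ2 / 2 := by
    have h1 : ∀ k ∈ Finset.Icc 1 K, l ^ 2 * R k ^ 2 / 8 = l ^ 2 / 2 * B k ^ 2 := by
      intro k _
      rw [hRdef]
      ring
    rw [Finset.sum_congr rfl h1, ← Finset.mul_sum, ← hσ2]
    ring
  rw [hsumC] at hmgfsum
  -- Markov
  obtain ⟨Z, hZdef⟩ : ∃ Z : Ω → ℝ,
      ∀ ω, Z ω = Real.exp (l * ∑ k ∈ Finset.Icc 1 K, D k ω) := ⟨_, fun ω => rfl⟩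
  have hZfun : Z = fun ω => Real.exp (l * ∑ k ∈ Finset.Icc 1 K, D k ω) := by
    funext ω; rw [hZdef]
  have hZmeas : AEStronglyMeasurable Z P := by
    rw [hZfun]
    refine Real.continuous_exp.comp_aestronglyMeasurable (AEStronglyMeasurable.const_mul ?_ l)
    refine (Finset.stronglyMeasurable_fun_sum _ (fun k hk => ?_)).aestronglyMeasurable
    exact ((hDmeas k hk).mono (hFle k))
  have hZnn : ∀ ω, 0 ≤ Z ω := fun ω => by rw [hZdef]; positivity
  have hDallbd : ∀ᵐ ω ∂P, ∀ k ∈ Finset.Icc 1 K, |D k ω| ≤ 2 * B k := by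
    rw [Filter.eventually_all_finset]
    exact hDbdd
  have hZint : Integrable Z P := by
    refine AH.integrable_of_ae_bdd (M := Real.exp (|l| * ∑ k ∈ Finset.Icc 1 K, (2 * B k))) 
      hZmeas ?_
    filter_upwards [hDallbd] with ω hω
    rw [hZdef, abs_of_nonneg (Real.exp_pos _).le]
    apply Real.exp_le_exp.2
    calc l * ∑ k ∈ Finset.Icc 1 K, D k ω ≤ |l * ∑ k ∈ Finset.Icc 1 K, D k ω| := le_abs_self _
      _ = |l| * |∑ k ∈ Finset.Icc 1 K, D k ω| := abs_mul _ _
      _ ≤ |l| * ∑ k ∈ Finset.Icc 1 K, (2 * B k) := by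
          refine mul_le_mul_of_nonneg_left ?_ (abs_nonneg l)
          exact (Finset.abs_sum_le_sum_abs _ _).trans (Finset.sum_le_sum hω)
  have hZExp : ∫ ω, Z ω ∂P ≤ Real.exp (l ^ 2 * σ2 / 2) := by
    rw [hZfun]
    exact hmgfsum
  have hmark := mul_meas_ge_le_integral_of_nonneg
    (Filter.Eventually.of_forall hZnn) hZint (Real.exp (l * s))
  have hAset : (P {ω | Real.exp (l * s) ≤ Z ω}).toReal
      ≤ Real.exp (l ^ 2 * σ2 / 2 - l * s) := by
    have h1 : Real.exp (l * s) * (P {ω | Real.exp (l * s) ≤ Z ω}).toReal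
        ≤ Real.exp (l ^ 2 * σ2 / 2) := le_trans hmark hZExp
    rw [Real.exp_sub, le_div_iff₀ (Real.exp_pos _)]
    calc (P {ω | Real.exp (l * s) ≤ Z ω}).toReal * Real.exp (l * s)
        = Real.exp (l * s) * (P {ω | Real.exp (l * s) ≤ Z ω}).toReal := by ring
      _ ≤ Real.exp (l ^ 2 * σ2 / 2) := h1
  have hexpval : l ^ 2 * σ2 / 2 - l * s = -(2 * r - 1) ^ 2 / 2 :=
    AH.chernoff_arith hσ2pos hσ'2 hs hl
  have hdelta : Real.exp (-(2 * r - 1) ^ 2 / 2) ≤ δ :=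
    AH.final_numeric hδ0 hδ1 hLdef hr2
  -- combine : bad set has small measure
  have hbadsub : {ω | ¬ (‖∑ k ∈ Finset.Icc 1 K, ε k ω‖ ^ 2 ≤
      4 * Real.log (4 / δ) * ∑ k ∈ Finset.Icc 1 K, (B k) ^ 2)}
      ≤ᵐ[P] {ω | Real.exp (l * s) ≤ Z ω} := by
    filter_upwards [htel] with ω hω
    intro hbad
    show Real.exp (l * s) ≤ Z ω
    have hbad' : ¬ (‖∑ k ∈ Finset.Icc 1 K, ε k ω‖ ^ 2 ≤
        4 * Real.log (4 / δ) * ∑ k ∈ Finset.Icc 1 K, (B k) ^ 2) := hbad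
    have hSK : ‖S K ω‖ ^ 2 > 4 * L * σ2 := by
      rw [hSdef]
      rw [← hLdef, ← hσ2] at hbad'
      linarith [not_le.1 hbad']
    have hnormgt : 2 * r * σ' < ‖S K ω‖ := by
      have h1 : (2 * r * σ') ^ 2 < ‖S K ω‖ ^ 2 := by
        have : (2 * r * σ') ^ 2 = 4 * L * σ2 := by
          rw [← hr2, ← hσ'2]; ring
        linarith
      by_contra hcon
      push_neg at hcon
      have h2 : (0:ℝ) ≤ 2 * r * σ' := by positivity
      have h3 := pow_le_pow_left₀ (norm_nonneg (S K ω)) hcon 2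
      linarith
    have hsumD : s ≤ ∑ k ∈ Finset.Icc 1 K, D k ω := by
      rw [hs]
      linarith
    rw [hZdef]
    apply Real.exp_le_exp.2
    exact mul_le_mul_of_nonneg_left hsumD hlpos.le
  have hbadmeas : MeasurableSet {ω | ¬ (‖∑ k ∈ Finset.Icc 1 K, ε k ω‖ ^ 2 ≤
      4 * Real.log (4 / δ) * ∑ k ∈ Finset.Icc 1 K, (B k) ^ 2)} := by
    have hSKmeas : Measurable (fun ω => ‖∑ k ∈ Finset.Icc 1 K, ε k ω‖ ^ 2) := by
      have h1 : StronglyMeasurable[m0] (fun ω => ∑ k ∈ Finset.Icc 1 K, ε k ω) := by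
        refine Finset.stronglyMeasurable_fun_sum _ (fun k hk => ?_)
        exact (hmeas k hk).mono (hFle k)
      exact (h1.measurable.norm).pow_const 2
    exact (measurableSet_le hSKmeas measurable_const).compl
  have hbadP : P {ω | ¬ (‖∑ k ∈ Finset.Icc 1 K, ε k ω‖ ^ 2 ≤
      4 * Real.log (4 / δ) * ∑ k ∈ Finset.Icc 1 K, (B k) ^ 2)} ≤ ENNReal.ofReal δ := by
    refine le_trans (measure_mono_ae hbadsub) ?_
    rw [ENNReal.le_ofReal_iff_toReal_le (measure_ne_top _ _) hδ0.le]
    calc (P {ω | Real.exp (l * s) ≤ Z ω}).toReal ≤ Real.exp (l ^ 2 * σ2 / 2 - l * s) := hAset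
      _ = Real.exp (-(2 * r - 1) ^ 2 / 2) := by rw [hexpval]
      _ ≤ δ := hdelta
  -- conclude
  have hcompl : {ω | ‖∑ k ∈ Finset.Icc 1 K, ε k ω‖ ^ 2 ≤
      4 * Real.log (4 / δ) * ∑ k ∈ Finset.Icc 1 K, (B k) ^ 2}
      = {ω | ¬ (‖∑ k ∈ Finset.Icc 1 K, ε k ω‖ ^ 2 ≤
      4 * Real.log (4 / δ) * ∑ k ∈ Finset.Icc 1 K, (B k) ^ 2)}ᶜ := by
    ext ω; simp
  rw [hcompl, prob_compl_eq_one_sub hbadmeas]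
  have h2 : ENNReal.ofReal (1 - δ) = 1 - ENNReal.ofReal δ := by
    rw [ENNReal.ofReal_sub _ hδ0.le, ENNReal.ofReal_one]
  rw [h2]
  exact tsub_le_tsub_left hbadP 1
end

section
/- Let F : ℝ^d → ℝ be L-smooth and let ε > 0. Fix x, d ∈ ℝ^d with ‖d‖₂ ≥ ε and ‖d − ∇F(x)‖₂ ≤ ε/2, let 0 < η ≤ ε/(2L), and set x' = x − (η/‖d‖₂) d. Then F(x') ≤ F(x) − η ε / 8. -/
open scoped RealInnerProductSpace

/-- Descent lemma: an `L`-smooth function is bounded above by its quadratic model. -/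
lemma smooth_descent_aux
    {dim : ℕ} (F : EuclideanSpace ℝ (Fin dim) → ℝ) (L : ℝ) (hL : 0 ≤ L)
    (hdiff : Differentiable ℝ F)
    (hlip : ∀ x y, ‖gradient F x - gradient F y‖ ≤ L * ‖x - y‖)
    (x y : EuclideanSpace ℝ (Fin dim)) :
    F y ≤ F x + ⟪gradient F x, y - x⟫ + L / 2 * ‖y - x‖ ^ 2 := by
  set v := y - x with hv
  -- gradient is continuous
  have hgc : Continuous (gradient F) := by
    have : LipschitzWith (Real.toNNReal L) (gradient F) := by
      apply LipschitzWith.of_dist_le_mul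
      intro a b
      rw [dist_eq_norm, dist_eq_norm]
      simpa [Real.coe_toNNReal L hL] using hlip a b
    exact this.continuous
  have hline : Continuous (fun t : ℝ => x + t • v) :=
    continuous_const.add (continuous_id.smul continuous_const)
  -- the derivative of t ↦ F (x + t • v)
  have hg : ∀ t : ℝ, HasDerivAt (fun s : ℝ => F (x + s • v))
      (⟪gradient F (x + t • v), v⟫) t := by
    intro t
    have h1 : HasDerivAt (fun s : ℝ => x + s • v) v t := by
      simpa using ((hasDerivAt_id t).smul_const v).const_add x
    have h2 := (hdiff (x + t • v)).hasGradientAt.hasFDerivAt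
    have := h2.comp_hasDerivAt t h1
    rw [InnerProductSpace.toDual_apply_apply] at this
    exact this
  have hcont : Continuous (fun t : ℝ => ⟪gradient F (x + t • v), v⟫) :=
    ((hgc.comp hline).inner continuous_const)
  have hFTC : F y - F x = ∫ t in (0:ℝ)..1, ⟪gradient F (x + t • v), v⟫ := by
    have h := intervalIntegral.integral_eq_sub_of_hasDerivAt (fun t (_ : t ∈ Set.uIcc (0:ℝ) 1) => hg t)
      (hcont.intervalIntegrable 0 1)
    have e1 : x + (1:ℝ) • v = y := by rw [hv]; module
    have e2 : x + (0:ℝ) • v = x := by simp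
    rw [h, e1, e2]
  have hpt : ∀ t ∈ Set.Icc (0:ℝ) 1,
      ⟪gradient F (x + t • v), v⟫ ≤ ⟪gradient F x, v⟫ + (L * ‖v‖ ^ 2) * t := by
    intro t ht
    have : ⟪gradient F (x + t • v), v⟫ - ⟪gradient F x, v⟫
        = ⟪gradient F (x + t • v) - gradient F x, v⟫ := by
      rw [inner_sub_left]
    have hb : ⟪gradient F (x + t • v) - gradient F x, v⟫ ≤ L * (t * ‖v‖) * ‖v‖ := by
      calc ⟪gradient F (x + t • v) - gradient F x, v⟫
          ≤ ‖gradient F (x + t • v) - gradient F x‖ * ‖v‖ :=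
            real_inner_le_norm _ _
        _ ≤ (L * ‖x + t • v - x‖) * ‖v‖ :=
            mul_le_mul_of_nonneg_right (hlip _ _) (norm_nonneg v)
        _ = L * (t * ‖v‖) * ‖v‖ := by
            rw [show x + t • v - x = t • v by abel, norm_smul,
              Real.norm_eq_abs, abs_of_nonneg ht.1]
    nlinarith [hb, this]
  have hint : (∫ t in (0:ℝ)..1, ⟪gradient F (x + t • v), v⟫)
      ≤ ∫ t in (0:ℝ)..1, (⟪gradient F x, v⟫ + (L * ‖v‖ ^ 2) * t) := by
    apply intervalIntegral.integral_mono_on (by norm_num)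
      (hcont.intervalIntegrable 0 1)
      ((continuous_const.add (continuous_const.mul continuous_id) :
        Continuous fun t : ℝ =>
        (⟪gradient F x, v⟫ + (L * ‖v‖ ^ 2) * t)).intervalIntegrable 0 1)
      hpt
  have hval : (∫ t in (0:ℝ)..1, (⟪gradient F x, v⟫ + (L * ‖v‖ ^ 2) * t))
      = ⟪gradient F x, v⟫ + L / 2 * ‖v‖ ^ 2 := by
    have hder : ∀ t : ℝ, HasDerivAt
        (fun s : ℝ => ⟪gradient F x, v⟫ * s + (L * ‖v‖ ^ 2) * s ^ 2 / 2)
        (⟪gradient F x, v⟫ + (L * ‖v‖ ^ 2) * t) t := by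
      intro t
      have h1 := (hasDerivAt_id t).const_mul (⟪gradient F x, v⟫)
      have h2 := ((hasDerivAt_pow 2 t).const_mul (L * ‖v‖ ^ 2)).div_const 2
      exact (h1.add h2).congr_deriv (by push_cast; ring)
    rw [intervalIntegral.integral_eq_sub_of_hasDerivAt (fun t _ => hder t)
      ((continuous_const.add (continuous_const.mul continuous_id) :
        Continuous fun t : ℝ =>
        ⟪gradient F x, v⟫ + (L * ‖v‖ ^ 2) * t).intervalIntegrable 0 1)]
    norm_num
    ring
  have := hFTC ▸ (hval ▸ hint)
  linarith

/-- One step of normalized gradient descent with an estimated gradient of large norm: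
if `F` is `L`-smooth, `‖d‖ ≥ ε`, `‖d − ∇F(x)‖ ≤ ε/2`, `0 < η ≤ ε/(2L)` and
`x' = x − (η/‖d‖) d`, then `F(x') ≤ F(x) − ηε/8`. -/
theorem normalized_gd_step_decrease
    {dim : ℕ} (F : EuclideanSpace ℝ (Fin dim) → ℝ) (L ε : ℝ) (hε : 0 < ε)
    (hdiff : Differentiable ℝ F)
    (hlip : ∀ x y, ‖gradient F x - gradient F y‖ ≤ L * ‖x - y‖)
    (x d : EuclideanSpace ℝ (Fin dim))
    (hd : ε ≤ ‖d‖) (herr : ‖d - gradient F x‖ ≤ ε / 2)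
    (η : ℝ) (hη0 : 0 < η) (hη : η ≤ ε / (2 * L))
    (x' : EuclideanSpace ℝ (Fin dim)) (hx' : x' = x - (η / ‖d‖) • d) :
    F x' ≤ F x - η * ε / 8 := by
  have hL : 0 < L := by
    by_contra h
    push_neg at h
    have : ε / (2 * L) ≤ 0 :=
      div_nonpos_of_nonneg_of_nonpos hε.le (by linarith)
    linarith
  have hdpos : 0 < ‖d‖ := lt_of_lt_of_le hε hd
  have hdesc := smooth_descent_aux F L hL.le hdiff hlip x x'
  have hvx : x' - x = -(η / ‖d‖) • d := by rw [hx']; module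
  have hnv : ‖x' - x‖ = η := by
    rw [hvx, norm_smul, Real.norm_eq_abs, abs_neg,
      abs_of_pos (div_pos hη0 hdpos), div_mul_cancel₀ _ hdpos.ne']
  -- inner product bound
  have hgd : ‖d‖ ^ 2 - ε / 2 * ‖d‖ ≤ ⟪gradient F x, d⟫ := by
    have h1 : ⟪d - gradient F x, d⟫ ≤ ε / 2 * ‖d‖ := by
      calc ⟪d - gradient F x, d⟫ ≤ ‖d - gradient F x‖ * ‖d‖ := real_inner_le_norm _ _
        _ ≤ ε / 2 * ‖d‖ := by gcongr
    have h2 : ⟪d - gradient F x, d⟫ = ‖d‖ ^ 2 - ⟪gradient F x, d⟫ := by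
      rw [inner_sub_left, real_inner_self_eq_norm_sq]
    linarith
  have hinner : ⟪gradient F x, x' - x⟫ ≤ -(η * ε) / 2 := by
    rw [hvx, real_inner_smul_right]
    have h3 : η / ‖d‖ * (‖d‖ ^ 2 - ε / 2 * ‖d‖) ≤ η / ‖d‖ * ⟪gradient F x, d⟫ := by
      gcongr
    have h4 : η / ‖d‖ * (‖d‖ ^ 2 - ε / 2 * ‖d‖) = η * ‖d‖ - η * ε / 2 := by
      field_simp
      try ring
    nlinarith [mul_le_mul_of_nonneg_left hd hη0.le]
  have hLη : L * η ≤ ε / 2 := by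
    have := (le_div_iff₀ (by linarith : (0:ℝ) < 2 * L)).mp hη
    nlinarith
  rw [hnv] at hdesc
  nlinarith [hdesc, hinner, hLη, hη0.le, hε.le]
end

section
/- Let F : ℝ^d → ℝ be L-smooth, let δ ∈ (0,1), σ > 0, B > 0, ε > 0, and let 0 < η_H ≤ 1/(L √(128 log(4/δ))). Set D̄ = σ²/(4 B L²) and let r satisfy 0 < r ≤ min{ log(4/δ) η_H σ² / (2 B ε), √(2 log(4/δ) η_H σ² / (B L)) }. Let m < T be natural numbers with T − m ≥ 2, and let x_m, x_{m+1}, …, x_T ∈ ℝ^d be a sequence such that: (i) x_{m+1} = x_m + ξ for some ξ with ‖ξ‖₂ ≤ r, and there is d_m ∈ ℝ^d with ‖d_m‖₂ ≤ ε and ‖d_m − ∇F(x_m)‖₂ ≤ ε/2; (ii) for every i with m < i < T, x_{i+1} = x_i − η_i d_i with 0 < η_i ≤ η_H and ‖d_i − ∇F(x_i)‖₂² ≤ 8 log(4/δ) σ²/B; (iii) ∑_{i=m+1}^{T−1} ‖x_{i+1} − x_i‖₂² ≥ (T − m − 1) D̄. Then F(x_m) − F(x_T) ≥ (T − m) log(4/δ)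 η_H σ² / B. -/
open RealInnerProductSpace intervalIntegral

theorem my_descent {dim : ℕ} (F : EuclideanSpace ℝ (Fin dim) → ℝ) (L : ℝ) (hL : 0 ≤ L)
    (hdiff : Differentiable ℝ F)
    (hlip : ∀ u v, ‖gradient F u - gradient F v‖ ≤ L * ‖u - v‖)
    (x y : EuclideanSpace ℝ (Fin dim)) :
    F y ≤ F x + ⟪gradient F x, y - x⟫ + L / 2 * ‖y - x‖ ^ 2 := by
  have hcont : Continuous (gradient F) := by
    have hle : LipschitzWith L.toNNReal (gradient F) := by
      apply LipschitzWith.of_dist_le_mul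
      intro u v
      rw [dist_eq_norm, dist_eq_norm]
      calc ‖gradient F u - gradient F v‖ ≤ L * ‖u - v‖ := hlip u v
        _ = L.toNNReal * ‖u - v‖ := by rw [Real.coe_toNNReal L hL]
    exact hle.continuous
  set γ : ℝ → EuclideanSpace ℝ (Fin dim) := fun t => x + t • (y - x) with hγdef
  have hγcont : Continuous γ := by
    apply continuous_const.add (continuous_id.smul continuous_const)
  have hγd : ∀ t : ℝ, HasDerivAt γ (y - x) t := by
    intro t
    have h1 : HasDerivAt (fun t : ℝ => t • (y - x)) ((1:ℝ) • (y - x)) t :=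
      (hasDerivAt_id t).smul_const (y - x)
    have h2 := h1.const_add x
    rw [one_smul] at h2
    exact h2
  set φ : ℝ → ℝ := fun t => ⟪gradient F (γ t), y - x⟫ with hφdef
  have hgd : ∀ t : ℝ, HasDerivAt (fun s => F (γ s)) (φ t) t := by
    intro t
    have hF : HasGradientAt F (gradient F (γ t)) (γ t) := (hdiff (γ t)).hasGradientAt
    have hF' : HasFDerivAt F (InnerProductSpace.toDual ℝ _ (gradient F (γ t))) (γ t) :=
      hasGradientAt_iff_hasFDerivAt.mp hF
    have := hF'.comp_hasDerivAt t (hγd t)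
    simp only [InnerProductSpace.toDual_apply_apply] at this
    exact this
  have hφcont : Continuous φ := (hcont.comp hγcont).inner continuous_const
  have hftc : ∫ t in (0:ℝ)..1, φ t = F (γ 1) - F (γ 0) :=
    integral_eq_sub_of_hasDerivAt (fun t _ => hgd t) (hφcont.intervalIntegrable 0 1)
  have hγ1 : γ 1 = y := by simp [hγdef]
  have hγ0 : γ 0 = x := by simp [hγdef]
  set c : ℝ := ⟪gradient F x, y - x⟫ with hcdef
  set K : ℝ := ‖y - x‖ ^ 2 with hKdef
  have hrhscont : Continuous (fun t : ℝ => c + (L * K) * t) :=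
    continuous_const.add (continuous_const.mul continuous_id)
  have hmono : ∫ t in (0:ℝ)..1, φ t ≤ ∫ t in (0:ℝ)..1, (c + (L * K) * t) := by
    apply integral_mono_on (by norm_num) (hφcont.intervalIntegrable 0 1)
      (hrhscont.intervalIntegrable 0 1)
    intro t ht
    have hsub : φ t - c = ⟪gradient F (γ t) - gradient F x, y - x⟫ := by
      rw [inner_sub_left]
    have hbd : ⟪gradient F (γ t) - gradient F x, y - x⟫ ≤
        ‖gradient F (γ t) - gradient F x‖ * ‖y - x‖ := real_inner_le_norm _ _
    have hγsub : γ t - x = t • (y - x) := by simp [hγdef]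
    have hlipt : ‖gradient F (γ t) - gradient F x‖ ≤ L * (t * ‖y - x‖) := by
      calc ‖gradient F (γ t) - gradient F x‖ ≤ L * ‖γ t - x‖ := hlip _ _
        _ = L * (t * ‖y - x‖) := by
            rw [hγsub, norm_smul, Real.norm_eq_abs, abs_of_nonneg ht.1]
    have hyx : (0:ℝ) ≤ ‖y - x‖ := norm_nonneg _
    have hfin : ‖gradient F (γ t) - gradient F x‖ * ‖y - x‖ ≤ L * K * t := by
      rw [hKdef]; nlinarith [mul_le_mul_of_nonneg_right hlipt hyx]
    linarith
  have hrhs : ∫ t in (0:ℝ)..1, (c + (L * K) * t) = c + (L * K) / 2 := by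
    have h2 : ∫ t in (0:ℝ)..1, (L * K) * t = (L * K) / 2 := by
      rw [integral_const_mul, integral_id]; ring
    rw [integral_add (f := fun _ => c) (g := fun t => (L * K) * t) (intervalIntegrable_const)
      ((continuous_const.mul continuous_id).intervalIntegrable 0 1),
      integral_const, h2]
    norm_num
  rw [hγ1, hγ0] at hftc
  have : F y - F x ≤ c + (L * K) / 2 := by rw [← hftc]; linarith [hmono, hrhs.le]
  linarith

set_option maxHeartbeats 1600000 in
/-- Localization lemma for LENA-SPIDER: if the escape phase starting at step `m` with a
perturbation of radius `r` breaks at step `T` (so that the accumulated squared movement is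
at least `(T − m − 1) D̄` with `D̄ = σ²/(4BL²)`), then the function value decreases by at
least `(T − m) log(4/δ) η_H σ² / B`. -/
theorem localization_spider
    {dim : ℕ} (F : EuclideanSpace ℝ (Fin dim) → ℝ) (L : ℝ)
    (hdiff : Differentiable ℝ F)
    (hlip : ∀ u v, ‖gradient F u - gradient F v‖ ≤ L * ‖u - v‖)
    (δ σ B ε ηH Dbar r : ℝ)
    (hδ : δ ∈ Set.Ioo (0 : ℝ) 1) (hσ : 0 < σ) (hB : 0 < B) (hε : 0 < ε)
    (hηH0 : 0 < ηH) (hηH : ηH ≤ 1 / (L * Real.sqrt (128 * Real.log (4 / δ))))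
    (hDbar : Dbar = σ ^ 2 / (4 * B * L ^ 2))
    (hr0 : 0 < r)
    (hr : r ≤ min (Real.log (4 / δ) * ηH * σ ^ 2 / (2 * B * ε))
        (Real.sqrt (2 * Real.log (4 / δ) * ηH * σ ^ 2 / (B * L))))
    (m T : ℕ) (hmT : m < T) (hTm : 2 ≤ T - m)
    (x : ℕ → EuclideanSpace ℝ (Fin dim))
    (d : ℕ → EuclideanSpace ℝ (Fin dim)) (η : ℕ → ℝ)
    (ξ : EuclideanSpace ℝ (Fin dim)) (hξ : ‖ξ‖ ≤ r)
    (hpert : x (m + 1) = x m + ξ)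
    (hdm : ‖d m‖ ≤ ε) (hdmerr : ‖d m - gradient F (x m)‖ ≤ ε / 2)
    (hupd : ∀ i, m < i → i < T → x (i + 1) = x i - η i • d i)
    (hstep : ∀ i, m < i → i < T → 0 < η i ∧ η i ≤ ηH)
    (herr : ∀ i, m < i → i < T →
      ‖d i - gradient F (x i)‖ ^ 2 ≤ 8 * Real.log (4 / δ) * σ ^ 2 / B)
    (hmove : ((T - m - 1 : ℕ) : ℝ) * Dbar ≤
      ∑ i ∈ Finset.Ico (m + 1) T, ‖x (i + 1) - x i‖ ^ 2) :
    ((T - m : ℕ) : ℝ) * Real.log (4 / δ) * ηH * σ ^ 2 / B ≤ F (x m) - F (x T) := by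
  obtain ⟨hδ0, hδ1⟩ := hδ
  set ℓ := Real.log (4 / δ) with hℓdef
  have hℓ1 : 1 < ℓ := by
    rw [hℓdef, Real.lt_log_iff_exp_lt (by positivity)]
    have h4 : (4:ℝ) < 4 / δ := by
      rw [lt_div_iff₀ hδ0]; nlinarith
    calc Real.exp 1 ≤ 2.7182818286 := Real.exp_one_lt_d9.le
      _ < 4 := by norm_num
      _ < 4 / δ := h4
  have hsqpos : 0 < Real.sqrt (128 * ℓ) := Real.sqrt_pos.mpr (by nlinarith)
  have hL : 0 < L := by
    by_contra h
    push_neg at h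
    have h1 : L * Real.sqrt (128 * ℓ) ≤ 0 := mul_nonpos_of_nonpos_of_nonneg h hsqpos.le
    have h2 : 1 / (L * Real.sqrt (128 * ℓ)) ≤ 0 := one_div_nonpos.mpr h1
    linarith
  have h1 : ηH * (L * Real.sqrt (128 * ℓ)) ≤ 1 := by
    have := (le_div_iff₀ (by positivity : 0 < L * Real.sqrt (128 * ℓ))).mp hηH
    linarith
  have hsq2 : Real.sqrt (128 * ℓ) ^ 2 = 128 * ℓ := Real.sq_sqrt (by nlinarith)
  have hkey : L ^ 2 * ηH ^ 2 * (128 * ℓ) ≤ 1 := by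
    have ha : 0 ≤ ηH * (L * Real.sqrt (128 * ℓ)) := by positivity
    calc L ^ 2 * ηH ^ 2 * (128 * ℓ) = (ηH * (L * Real.sqrt (128 * ℓ))) ^ 2 := by
          rw [mul_pow, mul_pow, hsq2]; ring
      _ ≤ 1 := by nlinarith [h1, ha]
  have hLηH : L * ηH ≤ 1 / 2 := by
    nlinarith [hkey, mul_nonneg (sq_nonneg (L * ηH)) (by linarith : (0:ℝ) ≤ ℓ - 1),
      mul_pos hL hηH0, sq_nonneg (L * ηH - 1 / 2)]
  -- per-step descent bound
  have step : ∀ i, m < i → i < T →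
      F (x (i + 1)) + ‖x (i + 1) - x i‖ ^ 2 / (4 * ηH) ≤ F (x i) + 4 * (ℓ * ηH * σ ^ 2 / B) := by
    intro i him hiT
    obtain ⟨hη0, hηle⟩ := hstep i him hiT
    have hv : x (i + 1) - x i = -(η i • d i) := by
      rw [hupd i him hiT]; exact sub_sub_cancel_left _ _
    have hdesc := my_descent F L hL.le hdiff hlip (x i) (x (i + 1))
    rw [hv] at hdesc
    rw [hv]
    set g := gradient F (x i) with hg
    have hn : ‖-(η i • d i)‖ ^ 2 = η i ^ 2 * ‖d i‖ ^ 2 := by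
      rw [norm_neg, norm_smul, Real.norm_eq_abs, mul_pow, sq_abs]
    have hip : ⟪g, -(η i • d i)⟫ = -(η i * ⟪g, d i⟫) := by
      rw [inner_neg_right, real_inner_smul_right]
    have hexp : ⟪g, d i⟫ = ‖d i‖ ^ 2 - ⟪d i - g, d i⟫ := by
      rw [inner_sub_left, real_inner_self_eq_norm_sq]; ring
    have hcs : ⟪d i - g, d i⟫ ≤ ‖d i - g‖ * ‖d i‖ := real_inner_le_norm _ _
    have he2 : ‖d i - g‖ ^ 2 ≤ 8 * ℓ * σ ^ 2 / B := herr i him hiT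
    rw [hn, hip] at hdesc
    rw [hn]
    have hdn : (0:ℝ) ≤ ‖d i‖ ^ 2 := sq_nonneg _
    have hen : (0:ℝ) ≤ ‖d i - g‖ ^ 2 := sq_nonneg _
    have hamgm : ‖d i - g‖ * ‖d i‖ ≤ (‖d i - g‖ ^ 2 + ‖d i‖ ^ 2) / 2 := by
      nlinarith [sq_nonneg (‖d i - g‖ - ‖d i‖)]
    have hLηi : L * η i ≤ 1 / 2 := by nlinarith [hL, hηle, hLηH]
    have hmain : F (x (i + 1)) ≤ F (x i) - (η i / 4) * ‖d i‖ ^ 2 + (η i / 2) * ‖d i - g‖ ^ 2 := by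
      have ha1 : η i * ⟪d i - g, d i⟫ ≤ η i * ((‖d i - g‖ ^ 2 + ‖d i‖ ^ 2) / 2) :=
        mul_le_mul_of_nonneg_left (hcs.trans hamgm) hη0.le
      have ha2 : L / 2 * (η i ^ 2 * ‖d i‖ ^ 2) ≤ (η i / 4) * ‖d i‖ ^ 2 := by
        nlinarith [mul_nonneg hη0.le hdn, hLηi]
      have ha3 : η i * ⟪g, d i⟫ = η i * ‖d i‖ ^ 2 - η i * ⟪d i - g, d i⟫ := by
        rw [hexp]; ring
      linarith
    have hdiv : η i ^ 2 * ‖d i‖ ^ 2 / (4 * ηH) ≤ (η i / 4) * ‖d i‖ ^ 2 := by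
      rw [div_le_iff₀ (by positivity)]
      nlinarith [mul_nonneg (mul_nonneg hη0.le hdn) (sub_nonneg.mpr hηle)]
    have herrb : (η i / 2) * ‖d i - g‖ ^ 2 ≤ 4 * (ℓ * ηH * σ ^ 2 / B) := by
      calc (η i / 2) * ‖d i - g‖ ^ 2 ≤ (ηH / 2) * (8 * ℓ * σ ^ 2 / B) :=
            mul_le_mul (by linarith) he2 hen (by linarith)
        _ = 4 * (ℓ * ηH * σ ^ 2 / B) := by field_simp; ring
    linarith
  -- telescoping
  have tele : ∀ n, m + 1 ≤ n → n ≤ T →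
      F (x n) + (∑ i ∈ Finset.Ico (m + 1) n, ‖x (i + 1) - x i‖ ^ 2) / (4 * ηH)
        ≤ F (x (m + 1)) + ((n - (m + 1) : ℕ) : ℝ) * (4 * (ℓ * ηH * σ ^ 2 / B)) := by
    intro n hn
    induction n, hn using Nat.le_induction with
    | base => intro _; simp
    | succ n hn ih =>
      intro hn1T
      have ihn := ih (by omega)
      have hstepn := step n (by omega) (by omega)
      rw [Finset.sum_Ico_succ_top hn]
      have hcast : ((n + 1 - (m + 1) : ℕ) : ℝ) = ((n - (m + 1) : ℕ) : ℝ) + 1 := by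
        have h : n + 1 - (m + 1) = (n - (m + 1)) + 1 := by omega
        rw [h]; push_cast; ring
      rw [hcast, add_div]
      have hexpand : (((n - (m + 1) : ℕ) : ℝ) + 1) * (4 * (ℓ * ηH * σ ^ 2 / B))
          = ((n - (m + 1) : ℕ) : ℝ) * (4 * (ℓ * ηH * σ ^ 2 / B)) + 4 * (ℓ * ηH * σ ^ 2 / B) := by
        ring
      rw [hexpand]
      linarith
  have htele := tele T (by omega) le_rfl
  have hc2 : ((T - (m + 1) : ℕ) : ℝ) = ((T - m : ℕ) : ℝ) - 1 := by
    have h : T - (m + 1) = (T - m) - 1 := by omega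
    rw [h, Nat.cast_sub (by omega)]; norm_num
  rw [hc2] at htele
  have hc1 : ((T - m - 1 : ℕ) : ℝ) = ((T - m : ℕ) : ℝ) - 1 := by
    rw [Nat.cast_sub (by omega)]; norm_num
  rw [hc1] at hmove
  have hk2 : (2:ℝ) ≤ ((T - m : ℕ) : ℝ) := by exact_mod_cast hTm
  -- perturbation step
  have hpertb : F (x (m + 1)) ≤ F (x m) + (7 / 4) * (ℓ * ηH * σ ^ 2 / B) := by
    have hdesc := my_descent F L hL.le hdiff hlip (x m) (x (m + 1))
    have hv : x (m + 1) - x m = ξ := by rw [hpert]; exact add_sub_cancel_left _ _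
    rw [hv] at hdesc
    have hgm : ‖gradient F (x m)‖ ≤ 3 / 2 * ε := by
      calc ‖gradient F (x m)‖ = ‖d m - (d m - gradient F (x m))‖ := by rw [sub_sub_cancel]
        _ ≤ ‖d m‖ + ‖d m - gradient F (x m)‖ := norm_sub_le _ _
        _ ≤ ε + ε / 2 := add_le_add hdm hdmerr
        _ = 3 / 2 * ε := by ring
    have hip : ⟪gradient F (x m), ξ⟫ ≤ (3 / 2 * ε) * r := by
      calc ⟪gradient F (x m), ξ⟫ ≤ ‖gradient F (x m)‖ * ‖ξ‖ := real_inner_le_norm _ _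
        _ ≤ (3 / 2 * ε) * r := mul_le_mul hgm hξ (norm_nonneg _) (by positivity)
    have hr1 : r ≤ ℓ * ηH * σ ^ 2 / (2 * B * ε) := le_trans hr (min_le_left _ _)
    have hip2 : (3 / 2 * ε) * r ≤ (3 / 4) * (ℓ * ηH * σ ^ 2 / B) := by
      calc (3 / 2 * ε) * r ≤ (3 / 2 * ε) * (ℓ * ηH * σ ^ 2 / (2 * B * ε)) :=
            mul_le_mul_of_nonneg_left hr1 (by positivity)
        _ = (3 / 4) * (ℓ * ηH * σ ^ 2 / B) := by field_simp; ring
    have hr2 : r ^ 2 ≤ 2 * ℓ * ηH * σ ^ 2 / (B * L) := by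
      have h := le_trans hr (min_le_right _ _)
      have harg : (0:ℝ) ≤ 2 * ℓ * ηH * σ ^ 2 / (B * L) := by positivity
      calc r ^ 2 ≤ Real.sqrt (2 * ℓ * ηH * σ ^ 2 / (B * L)) ^ 2 := by
            apply pow_le_pow_left₀ hr0.le h
        _ = _ := Real.sq_sqrt harg
    have hξ2 : ‖ξ‖ ^ 2 ≤ r ^ 2 := pow_le_pow_left₀ (norm_nonneg _) hξ 2
    have hquad : L / 2 * ‖ξ‖ ^ 2 ≤ ℓ * ηH * σ ^ 2 / B := by
      calc L / 2 * ‖ξ‖ ^ 2 ≤ L / 2 * (2 * ℓ * ηH * σ ^ 2 / (B * L)) :=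
            mul_le_mul_of_nonneg_left (hξ2.trans hr2) (by positivity)
        _ = ℓ * ηH * σ ^ 2 / B := by field_simp
    linarith
  -- D̄ bound
  have hDb : 8 * (ℓ * ηH * σ ^ 2 / B) ≤ Dbar / (4 * ηH) := by
    have hL8 : 8 * (ℓ * ηH * σ ^ 2 / B) = (8 * ℓ * ηH * σ ^ 2) / B := by ring
    rw [hDbar, div_div, hL8, div_le_div_iff₀ (by positivity) (by positivity)]
    nlinarith [mul_le_mul_of_nonneg_right hkey (show (0:ℝ) ≤ B * σ ^ 2 by positivity)]
  have hQpos : (0:ℝ) < ℓ * ηH * σ ^ 2 / B := by positivity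
  have hSdiv : (((T - m : ℕ) : ℝ) - 1) * (8 * (ℓ * ηH * σ ^ 2 / B)) ≤
      (∑ i ∈ Finset.Ico (m + 1) T, ‖x (i + 1) - x i‖ ^ 2) / (4 * ηH) := by
    have h1 : (((T - m : ℕ) : ℝ) - 1) * Dbar / (4 * ηH) ≤
        (∑ i ∈ Finset.Ico (m + 1) T, ‖x (i + 1) - x i‖ ^ 2) / (4 * ηH) :=
      div_le_div_of_nonneg_right ?_ (by positivity)
    · have h2 : (((T - m : ℕ) : ℝ) - 1) * (8 * (ℓ * ηH * σ ^ 2 / B)) ≤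
          (((T - m : ℕ) : ℝ) - 1) * (Dbar / (4 * ηH)) :=
        mul_le_mul_of_nonneg_left hDb (by linarith)
      calc (((T - m : ℕ) : ℝ) - 1) * (8 * (ℓ * ηH * σ ^ 2 / B))
          ≤ (((T - m : ℕ) : ℝ) - 1) * (Dbar / (4 * ηH)) := h2
        _ = (((T - m : ℕ) : ℝ) - 1) * Dbar / (4 * ηH) := by ring
        _ ≤ _ := h1
    · exact hmove
  have hgoal_eq : ((T - m : ℕ) : ℝ) * ℓ * ηH * σ ^ 2 / B
      = ((T - m : ℕ) : ℝ) * (ℓ * ηH * σ ^ 2 / B) := by ring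
  rw [hgoal_eq]
  nlinarith [htele, hpertb, hSdiv, hk2, hQpos,
    mul_le_mul_of_nonneg_right (show (23/4:ℝ) ≤ 3 * ((T - m : ℕ) : ℝ) by linarith) hQpos.le]
end

section
/- Let F : ℝ^d → ℝ be L-smooth, let δ ∈ (0,1), σ > 0, b > 0, ε > 0, and let 0 < η_H ≤ 1/(2^{12} L log(4/δ)). Set D̄ = σ²/(4 b² L²) and let r satisfy 0 < r ≤ min{ log(4/δ)² η_H σ² / (4 b² ε), √(2 log(4/δ)² η_H σ² / (b² L)) }. Let m < T be natural numbers with T − m ≥ 2, and let x_m, x_{m+1}, …, x_T ∈ ℝ^d be a sequence such that: (i) x_{m+1} = x_m + ξ for some ξ with ‖ξ‖₂ ≤ r, and there is d_m ∈ ℝ^d with ‖d_m‖₂ ≤ ε and ‖d_m − ∇F(x_m)‖₂ ≤ ε/2; (ii) for every i with m < i < T, x_{i+1} = x_i − η_i d_i with 0 < η_i ≤ η_H and ‖d_i − ∇F(x_i)‖₂ ≤ 2^{10} log(4/δ) σ / b; (iii) ∑_{i=m+1}^{T−1} ‖x_{i+1} − x_i‖₂² ≥ (T − m − 1) D̄.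 Then F(x_m) − F(x_T) ≥ (T − m) log(4/δ)² η_H σ² / b². -/
open InnerProductSpace

lemma fderiv_eq_inner_gradient {dim : ℕ} (F : EuclideanSpace ℝ (Fin dim) → ℝ)
    (y v : EuclideanSpace ℝ (Fin dim)) :
    fderiv ℝ F y v = inner ℝ (gradient F y) v := by
  simp [gradient, InnerProductSpace.toDual_symm_apply]

lemma descent_lemma {dim : ℕ} (F : EuclideanSpace ℝ (Fin dim) → ℝ) (L : ℝ)
    (hdiff : Differentiable ℝ F)
    (hlip : ∀ u v, ‖gradient F u - gradient F v‖ ≤ L * ‖u - v‖)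
    (x v : EuclideanSpace ℝ (Fin dim)) :
    F (x + v) ≤ F x + inner ℝ (gradient F x) v + L / 2 * ‖v‖ ^ 2 := by
  set h : ℝ → ℝ := fun t => F (x + t • v) - t * inner ℝ (gradient F x) v - L / 2 * t ^ 2 * ‖v‖ ^ 2
    with hh
  have hderiv : ∀ t : ℝ, HasDerivAt h
      ((inner ℝ (gradient F (x + t • v)) v : ℝ) - inner ℝ (gradient F x) v - L * t * ‖v‖ ^ 2) t := by
    intro t
    have h1 : HasDerivAt (fun t : ℝ => x + t • v) v t := by
      simpa using ((hasDerivAt_id t).smul_const v).const_add x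
    have h2 : HasDerivAt (fun t : ℝ => F (x + t • v)) (fderiv ℝ F (x + t • v) v) t :=
      (hdiff (x + t • v)).hasFDerivAt.comp_hasDerivAt t h1
    rw [fderiv_eq_inner_gradient] at h2
    have h3 : HasDerivAt (fun t : ℝ => t * (inner ℝ (gradient F x) v : ℝ))
        (inner ℝ (gradient F x) v) t := by
      simpa using (hasDerivAt_id t).mul_const (inner ℝ (gradient F x) v : ℝ)
    have h4 : HasDerivAt (fun t : ℝ => L / 2 * t ^ 2 * ‖v‖ ^ 2) (L * t * ‖v‖ ^ 2) t := by
      have := ((hasDerivAt_pow 2 t).const_mul (L / 2)).mul_const (‖v‖ ^ 2)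
      exact this.congr_deriv (by ring)
    simpa [hh, Pi.sub_def] using (h2.sub h3).sub h4
  have hanti : AntitoneOn h (Set.Icc 0 1) := by
    apply antitoneOn_of_deriv_nonpos (convex_Icc 0 1)
    · exact (continuous_iff_continuousAt.mpr fun t => (hderiv t).continuousAt).continuousOn
    · intro t ht
      exact ((hderiv t).differentiableAt).differentiableWithinAt
    · intro t ht
      rw [interior_Icc] at ht
      rw [(hderiv t).deriv]
      have key : (inner ℝ (gradient F (x + t • v)) v : ℝ) - inner ℝ (gradient F x) v
          ≤ L * t * ‖v‖ ^ 2 := by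
        have h5 : (inner ℝ (gradient F (x + t • v)) v : ℝ) - inner ℝ (gradient F x) v
            = inner ℝ (gradient F (x + t • v) - gradient F x) v := by
          rw [inner_sub_left]
        rw [h5]
        calc (inner ℝ (gradient F (x + t • v) - gradient F x) v : ℝ)
            ≤ ‖gradient F (x + t • v) - gradient F x‖ * ‖v‖ := real_inner_le_norm _ _
          _ ≤ (L * ‖(x + t • v) - x‖) * ‖v‖ := by
              apply mul_le_mul_of_nonneg_right (hlip _ _) (norm_nonneg _)
          _ = L * t * ‖v‖ ^ 2 := by
              rw [add_sub_cancel_left, norm_smul, Real.norm_eq_abs, abs_of_pos ht.1]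
              ring
      linarith
  have := hanti (Set.left_mem_Icc.mpr zero_le_one) (Set.right_mem_Icc.mpr zero_le_one)
    zero_le_one
  simp only [hh, one_smul, one_pow, zero_smul, add_zero, zero_pow, one_mul, zero_mul,
    mul_zero, sub_zero] at this
  linarith

set_option maxHeartbeats 1000000 in
/-- Localization lemma for LENA-STORM: if the escape phase starting at step `m` with a
perturbation of radius `r` breaks at step `T` (so that the accumulated squared movement is
at least `(T − m − 1) D̄` with `D̄ = σ²/(4b²L²)`), then the function value decreases by at
least `(T − m) log(4/δ)² η_H σ² / b²`. -/
theorem localization_storm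
    {dim : ℕ} (F : EuclideanSpace ℝ (Fin dim) → ℝ) (L : ℝ)
    (hdiff : Differentiable ℝ F)
    (hlip : ∀ u v, ‖gradient F u - gradient F v‖ ≤ L * ‖u - v‖)
    (δ σ b ε ηH Dbar r : ℝ)
    (hδ : δ ∈ Set.Ioo (0 : ℝ) 1) (hσ : 0 < σ) (hb : 0 < b) (hε : 0 < ε)
    (hηH0 : 0 < ηH) (hηH : ηH ≤ 1 / (2 ^ 12 * L * Real.log (4 / δ)))
    (hDbar : Dbar = σ ^ 2 / (4 * b ^ 2 * L ^ 2))
    (hr0 : 0 < r)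
    (hr : r ≤ min (Real.log (4 / δ) ^ 2 * ηH * σ ^ 2 / (4 * b ^ 2 * ε))
        (Real.sqrt (2 * Real.log (4 / δ) ^ 2 * ηH * σ ^ 2 / (b ^ 2 * L))))
    (m T : ℕ) (hmT : m < T) (hTm : 2 ≤ T - m)
    (x : ℕ → EuclideanSpace ℝ (Fin dim))
    (d : ℕ → EuclideanSpace ℝ (Fin dim)) (η : ℕ → ℝ)
    (ξ : EuclideanSpace ℝ (Fin dim)) (hξ : ‖ξ‖ ≤ r)
    (hpert : x (m + 1) = x m + ξ)
    (hdm : ‖d m‖ ≤ ε) (hdmerr : ‖d m - gradient F (x m)‖ ≤ ε / 2)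
    (hupd : ∀ i, m < i → i < T → x (i + 1) = x i - η i • d i)
    (hstep : ∀ i, m < i → i < T → 0 < η i ∧ η i ≤ ηH)
    (herr : ∀ i, m < i → i < T →
      ‖d i - gradient F (x i)‖ ≤ 2 ^ 10 * Real.log (4 / δ) * σ / b)
    (hmove : ((T - m - 1 : ℕ) : ℝ) * Dbar ≤
      ∑ i ∈ Finset.Ico (m + 1) T, ‖x (i + 1) - x i‖ ^ 2) :
    ((T - m : ℕ) : ℝ) * Real.log (4 / δ) ^ 2 * ηH * σ ^ 2 / b ^ 2 ≤ F (x m) - F (x T) := by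
  set A := Real.log (4 / δ) with hA_def
  -- A > 1
  have hA1 : 1 < A := by
    have h4 : (4 : ℝ) ≤ 4 / δ := by
      rw [le_div_iff₀ hδ.1]; nlinarith [hδ.2, hδ.1]
    have hlog4 : 1 < Real.log 4 := by
      rw [Real.lt_log_iff_exp_lt (by norm_num : (0:ℝ) < 4)]
      calc Real.exp 1 < 2.7182818286 := Real.exp_one_lt_d9
        _ < 4 := by norm_num
    calc (1:ℝ) < Real.log 4 := hlog4
      _ ≤ A := Real.log_le_log (by norm_num) h4
  have hA0 : 0 < A := by linarith
  -- L > 0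
  have hL : 0 < L := by
    by_contra h
    push_neg at h
    have h1 : 2 ^ 12 * L * A ≤ 0 := by nlinarith
    have h2 : 1 / (2 ^ 12 * L * A) ≤ 0 := div_nonpos_of_nonneg_of_nonpos zero_le_one h1
    linarith
  have hη' : 2 ^ 12 * L * A * ηH ≤ 1 := by
    have h0 : (0:ℝ) < 2 ^ 12 * L * A := by positivity
    calc 2 ^ 12 * L * A * ηH ≤ 2 ^ 12 * L * A * (1 / (2 ^ 12 * L * A)) :=
          mul_le_mul_of_nonneg_left hηH h0.le
      _ = 1 := by field_simp
  set C := A ^ 2 * ηH * σ ^ 2 / b ^ 2 with hC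
  have hCpos : 0 < C := by rw [hC]; positivity
  -- first step bound
  have hr1 := le_trans hr (min_le_left _ _)
  have step0 : F (x m) - F (x (m + 1)) ≥ -(3 / 8 * C + C) := by
    have hdesc := descent_lemma F L hdiff hlip (x m) ξ
    rw [← hpert] at hdesc
    have hg : ‖gradient F (x m)‖ ≤ 3 * ε / 2 := by
      calc ‖gradient F (x m)‖ = ‖d m - (d m - gradient F (x m))‖ := by
            congr 1; abel
        _ ≤ ‖d m‖ + ‖d m - gradient F (x m)‖ := norm_sub_le _ _
        _ ≤ 3 * ε / 2 := by linarith
    have hin : (inner ℝ (gradient F (x m)) ξ : ℝ) ≤ 3 * ε / 2 * r := by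
      calc (inner ℝ (gradient F (x m)) ξ : ℝ) ≤ ‖gradient F (x m)‖ * ‖ξ‖ :=
            real_inner_le_norm _ _
        _ ≤ 3 * ε / 2 * r := by
            apply mul_le_mul hg hξ (norm_nonneg _) (by positivity)
    -- 3ε/2 * r ≤ 3/8 C
    have ha : 3 * ε / 2 * r ≤ 3 / 8 * C := by
      have h1 : A ^ 2 * ηH * σ ^ 2 / (4 * b ^ 2 * ε) = C / (4 * ε) := by
        rw [hC]; field_simp
      have h2 : r ≤ C / (4 * ε) := h1 ▸ hr1
      calc 3 * ε / 2 * r ≤ 3 * ε / 2 * (C / (4 * ε)) := by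
            apply mul_le_mul_of_nonneg_left h2 (by positivity)
        _ = 3 / 8 * C := by field_simp; ring
    -- L/2 r² ≤ C
    have hbnd : L / 2 * r ^ 2 ≤ C := by
      have hs0 : (0:ℝ) ≤ 2 * A ^ 2 * ηH * σ ^ 2 / (b ^ 2 * L) := by positivity
      have h3 := le_trans hr (min_le_right _ _)
      have hrs : r ^ 2 ≤ 2 * A ^ 2 * ηH * σ ^ 2 / (b ^ 2 * L) := by
        calc r ^ 2 ≤ Real.sqrt (2 * A ^ 2 * ηH * σ ^ 2 / (b ^ 2 * L)) ^ 2 :=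
              pow_le_pow_left₀ hr0.le h3 2
          _ = _ := Real.sq_sqrt hs0
      calc L / 2 * r ^ 2 ≤ L / 2 * (2 * A ^ 2 * ηH * σ ^ 2 / (b ^ 2 * L)) := by
            apply mul_le_mul_of_nonneg_left hrs (by positivity)
        _ = C := by rw [hC]; field_simp
    have hLxi : L / 2 * ‖ξ‖ ^ 2 ≤ L / 2 * r ^ 2 := by
      apply mul_le_mul_of_nonneg_left _ (by positivity)
      exact pow_le_pow_left₀ (norm_nonneg _) hξ 2
    linarith
  -- per-step bound
  have hstepF : ∀ i ∈ Finset.Ico (m + 1) T,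
      ‖x (i + 1) - x i‖ ^ 2 / (4 * ηH) - ηH / 2 * (2 ^ 10 * A * σ / b) ^ 2
        ≤ F (x i) - F (x (i + 1)) := by
    intro i hi
    simp only [Finset.mem_Ico] at hi
    have hmi : m < i := lt_of_lt_of_le (Nat.lt_succ_self m) hi.1
    obtain ⟨hη0, hηle⟩ := hstep i hmi hi.2
    have hxu := hupd i hmi hi.2
    have herri := herr i hmi hi.2
    set G : ℝ := 2 ^ 10 * A * σ / b with hG
    have hG0 : 0 < G := by positivity
    set D := ‖d i‖ with hD
    have hD0 : 0 ≤ D := norm_nonneg _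
    have hdesc := descent_lemma F L hdiff hlip (x i) (-(η i • d i))
    have hxv : x i + -(η i • d i) = x (i + 1) := by rw [hxu, sub_eq_add_neg]
    rw [hxv] at hdesc
    have hdelta : x (i + 1) - x i = -(η i • d i) := by rw [hxu]; abel
    have hnormv : ‖-(η i • d i)‖ = η i * D := by
      rw [norm_neg, norm_smul, Real.norm_eq_abs, abs_of_pos hη0]
    have hnv2 : ‖-(η i • d i)‖ ^ 2 = η i ^ 2 * D ^ 2 := by rw [hnormv]; ring
    have hinner : (inner ℝ (gradient F (x i)) (-(η i • d i)) : ℝ)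
        = -(η i * inner ℝ (gradient F (x i)) (d i)) := by
      rw [inner_neg_right, real_inner_smul_right]
    rw [hnv2, hinner] at hdesc
    have hgd : D ^ 2 - G * D ≤ (inner ℝ (gradient F (x i)) (d i) : ℝ) := by
      have h1 : (inner ℝ (gradient F (x i)) (d i) : ℝ)
          = inner ℝ (d i) (d i) - (inner ℝ (d i - gradient F (x i)) (d i) : ℝ) := by
        rw [inner_sub_left]; ring
      have h2 : (inner ℝ (d i - gradient F (x i)) (d i) : ℝ) ≤ G * D := by
        calc (inner ℝ (d i - gradient F (x i)) (d i) : ℝ)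
            ≤ ‖d i - gradient F (x i)‖ * ‖d i‖ := real_inner_le_norm _ _
          _ ≤ G * D := mul_le_mul_of_nonneg_right herri (norm_nonneg _)
      rw [h1, real_inner_self_eq_norm_sq]
      linarith
    have hLη : L * η i ≤ 1 / 2 := by
      have e1 : L * η i ≤ L * ηH := mul_le_mul_of_nonneg_left hηle hL.le
      have e2 : L * ηH * 2 ≤ L * ηH * (2 ^ 12 * A) := by
        apply mul_le_mul_of_nonneg_left _ (mul_nonneg hL.le hηH0.le)
        linarith
      linarith only [e1, e2, hη']
    have f1 : η i ^ 2 * D ^ 2 / (4 * ηH) ≤ η i * D ^ 2 / 4 := by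
      rw [div_le_div_iff₀ (by positivity) (by norm_num)]
      linarith only [mul_le_mul_of_nonneg_left hηle (mul_nonneg hη0.le (sq_nonneg D))]
    have f2 : L / 2 * (η i ^ 2 * D ^ 2) ≤ η i * D ^ 2 / 4 := by
      linarith only [mul_le_mul_of_nonneg_right hLη (mul_nonneg hη0.le (sq_nonneg D))]
    have f3 : η i * (G * D) ≤ η i * D ^ 2 / 2 + ηH * G ^ 2 / 2 := by
      linarith only [mul_nonneg hη0.le (sq_nonneg (D - G)),
        mul_nonneg (sub_nonneg.mpr hηle) (sq_nonneg G)]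
    have f4 : η i * (D ^ 2 - G * D) ≤ η i * inner ℝ (gradient F (x i)) (d i) :=
      mul_le_mul_of_nonneg_left hgd hη0.le
    rw [hdelta, hnv2]
    linarith only [f1, f2, f3, f4, hdesc]
  -- telescoping
  have htel : ∑ i ∈ Finset.Ico (m + 1) T, (F (x i) - F (x (i + 1)))
      = F (x (m + 1)) - F (x T) := by
    rw [Finset.sum_Ico_eq_sub _ (by omega : m + 1 ≤ T),
      Finset.sum_range_sub' (fun i => F (x i)), Finset.sum_range_sub' (fun i => F (x i))]
    ring
  have hcard : (Finset.Ico (m + 1) T).card = T - m - 1 := by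
    rw [Nat.card_Ico]; omega
  have hsum1 : ∑ i ∈ Finset.Ico (m + 1) T,
      (‖x (i + 1) - x i‖ ^ 2 / (4 * ηH) - ηH / 2 * (2 ^ 10 * A * σ / b) ^ 2)
      = (∑ i ∈ Finset.Ico (m + 1) T, ‖x (i + 1) - x i‖ ^ 2) / (4 * ηH)
        - ((T - m - 1 : ℕ) : ℝ) * (ηH / 2 * (2 ^ 10 * A * σ / b) ^ 2) := by
    rw [Finset.sum_sub_distrib, Finset.sum_const, hcard, nsmul_eq_mul, Finset.sum_div]
  have hmain2 : (∑ i ∈ Finset.Ico (m + 1) T, ‖x (i + 1) - x i‖ ^ 2) / (4 * ηH)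
      - ((T - m - 1 : ℕ) : ℝ) * (ηH / 2 * (2 ^ 10 * A * σ / b) ^ 2)
      ≤ F (x (m + 1)) - F (x T) := by
    rw [← htel, ← hsum1]
    exact Finset.sum_le_sum hstepF
  -- arithmetic
  set kR : ℝ := ((T - m - 1 : ℕ) : ℝ) with hkR
  have hkR1 : 1 ≤ kR := by
    rw [hkR]
    exact_mod_cast Nat.one_le_iff_ne_zero.mpr (by omega)
  have hsumge : kR * Dbar / (4 * ηH)
      ≤ (∑ i ∈ Finset.Ico (m + 1) T, ‖x (i + 1) - x i‖ ^ 2) / (4 * ηH) :=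
    div_le_div_of_nonneg_right hmove (by positivity) |>.trans_eq rfl
  have hsq : 2 ^ 24 * L ^ 2 * A ^ 2 * ηH ^ 2 ≤ 1 := by
    have h0 : (0:ℝ) ≤ 2 ^ 12 * L * A * ηH := by positivity
    have h1 : (2 ^ 12 * L * A * ηH) * (2 ^ 12 * L * A * ηH) ≤ 1 * 1 :=
      mul_le_mul hη' hη' h0 zero_le_one
    linarith only [h1]
  have hP : 2 ^ 19 * C + ηH / 2 * (2 ^ 10 * A * σ / b) ^ 2 ≤ Dbar / (4 * ηH) := by
    rw [hC, hDbar]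
    have hlhs : 2 ^ 19 * (A ^ 2 * ηH * σ ^ 2 / b ^ 2) + ηH / 2 * (2 ^ 10 * A * σ / b) ^ 2
        = 2 ^ 20 * A ^ 2 * ηH * σ ^ 2 / b ^ 2 := by
      field_simp; ring
    rw [hlhs, div_div, div_le_div_iff₀ (by positivity) (by positivity)]
    have key : (2 ^ 24 * L ^ 2 * A ^ 2 * ηH ^ 2) * σ ^ 2 ≤ 1 * σ ^ 2 :=
      mul_le_mul_of_nonneg_right hsq (sq_nonneg σ)
    have key2 : ((2 ^ 24 * L ^ 2 * A ^ 2 * ηH ^ 2) * σ ^ 2) * b ^ 2 ≤ (1 * σ ^ 2) * b ^ 2 :=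
      mul_le_mul_of_nonneg_right key (sq_nonneg b)
    linarith only [key2]
  have hkRstep : kR * (2 ^ 19 * C) ≤ kR * Dbar / (4 * ηH)
      - kR * (ηH / 2 * (2 ^ 10 * A * σ / b) ^ 2) := by
    have h1 := mul_le_mul_of_nonneg_left hP (by linarith : (0:ℝ) ≤ kR)
    have heq : kR * (Dbar / (4 * ηH)) = kR * Dbar / (4 * ηH) := by ring
    linarith only [h1, heq]
  have hcast : ((T - m : ℕ) : ℝ) = kR + 1 := by
    rw [hkR]
    have : T - m = (T - m - 1) + 1 := by omega
    rw [this]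
    push_cast
    ring
  have hgoal_eq : ((T - m : ℕ) : ℝ) * A ^ 2 * ηH * σ ^ 2 / b ^ 2 = (kR + 1) * C := by
    rw [hcast, hC]; field_simp
  rw [hgoal_eq]
  have hfinal : (kR + 1) * C ≤ kR * (2 ^ 19 * C) - (3 / 8 * C + C) := by
    have h1 : 0 ≤ (kR - 1) * C := mul_nonneg (by linarith) hCpos.le
    linarith only [h1, hCpos]
  linarith only [hmain2, hsumge, hkRstep, step0, hfinal]
end
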